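/- arXiv:2404.04658 — 4 statements merged into one kernel-verified Lean document; each statement's English description precedes it below -/
import Mathlib

section
/- Let γ ≥ 0, let k < m be nonnegative integers, let θ ∈ (0,1) and set s = (1−θ)k + θm. Let (u_{l,n,μ})_{(l,n,μ)∈I} be a family of real numbers with Σ_{(l,n,μ)∈I} (n+1)^k (n+l+1)^k u_{l,n,μ}² h_{l,n}² < ∞. For t > 0 define the modified K-functional K̃(t,u)² := inf over all real families (v_{l,n,μ})_{(l,n,μ)∈I} with Σ_I (n+1)^m (n+l+1)^m v_{l,n,μ}² h_{l,n}² < ∞ of Σ_{(l,n,μ)∈I} [ (n+1)^k (n+l+1)^k (u_{l,n,μ} − v_{l,n,μ})² + t² (n+1)^m (n+l+1)^m v_{l,n,μ}² ] h_{l,n}². Then ∫₀^∞ t^{−1−2θ} K̃(t,u)² dt = C_θ² · Σ_{(l,n,μ)∈I} (n+1)^s (n+l+1)^s u_{l,n,μ}² h_{l,n}², where C_θ² := ∫₀^∞ τ^{1−2θ}/(1+τ²) dτ is finite and positive (both sides of the equality may simultaneously equal +∞). -/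
open MeasureTheory

noncomputable section

/-- Jacobi polynomial `P_n^{(a,b)}(t)`, extended by `0` for `n < 0`. -/
def jacobiP (a b : ℝ) (n : ℤ) (t : ℝ) : ℝ :=
  if 0 ≤ n then
    (-1 : ℝ) ^ n.toNat *
      (Real.Gamma ((n.toNat : ℝ) + 1 + b) /
        ((n.toNat.factorial : ℝ) * Real.Gamma ((n.toNat : ℝ) + 1 + a + b))) *
      ∑ j ∈ Finset.range (n.toNat + 1),
        (-1 : ℝ) ^ j * (2 : ℝ) ^ (-(j : ℤ)) * (n.toNat.choose j : ℝ) *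
          (Real.Gamma ((n.toNat : ℝ) + (j : ℝ) + 1 + a + b) / Real.Gamma ((j : ℝ) + 1 + b)) *
          (1 + t) ^ j
  else 0

/-- Solid harmonic `𝒱_{l,μ}` on `ℝ²`: `𝒱_{0,1} = 1/2`, and for `l ≥ 1`,
`𝒱_{l,1} = Re((x+iy)^l) = r^l cos(lφ)`, `𝒱_{l,-1} = Im((x+iy)^l) = r^l sin(lφ)`;
it is `0` for `l < 0` and for `(l,μ) = (0,-1)`. -/
def solidH (l : ℤ) (μ : ℤ) (p : ℝ × ℝ) : ℝ :=
  if l = 0 then (if μ = 1 then 1 / 2 else 0)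
  else if 0 < l then
    (if μ = 1 then (((p.1 : ℂ) + (p.2 : ℂ) * Complex.I) ^ l.toNat).re
     else if μ = -1 then (((p.1 : ℂ) + (p.2 : ℂ) * Complex.I) ^ l.toNat).im
     else 0)
  else 0

/-- The open unit disk in `ℝ²`. -/
def unitDisk : Set (ℝ × ℝ) := {p : ℝ × ℝ | p.1 ^ 2 + p.2 ^ 2 < 1}

/-- Squared weighted `L²` norm `‖f‖_β² = ∫_Ω (1-r²)^β f²`. -/
def wnormSq (β : ℝ) (f : ℝ × ℝ → ℝ) : ℝ :=
  ∫ p in unitDisk, (1 - (p.1 ^ 2 + p.2 ^ 2)) ^ β * f p ^ 2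

/-- `h_{l,n} = ‖𝒱_{l,μ} P_n^{(γ,l)}(2r²-1)‖_γ`. -/
def hln (γ : ℝ) (l n : ℕ) : ℝ :=
  Real.sqrt (wnormSq γ (fun p =>
    solidH (l : ℤ) 1 p * jacobiP γ (l : ℝ) (n : ℤ) (2 * (p.1 ^ 2 + p.2 ^ 2) - 1)))

/-- Index set `I`: triples `(l,n,μ)` with `μ ∈ {1,-1}` (encoded as `Bool`, `true ↦ 1`),
excluding `l = 0, μ = -1`. -/
abbrev IdxI : Type := {x : ℕ × ℕ × Bool // ¬(x.1 = 0 ∧ x.2.2 = false)}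

def lIdx (i : IdxI) : ℕ := i.1.1
def nIdx (i : IdxI) : ℕ := i.1.2.1
def muIdx (i : IdxI) : ℤ := if i.1.2.2 then 1 else -1

def hh (γ : ℝ) (i : IdxI) : ℝ := hln γ (lIdx i) (nIdx i)

/-- The weight `(n+1)^σ (n+l+1)^σ`. -/
def wt (σ : ℝ) (i : IdxI) : ℝ :=
  ((nIdx i : ℝ) + 1) ^ σ * ((nIdx i : ℝ) + (lIdx i : ℝ) + 1) ^ σ

/-- The basis function `𝒱_{l,μ}(x) P_n^{(γ,l)}(2r²-1)`. -/
def basisF (γ : ℝ) (i : IdxI) (p : ℝ × ℝ) : ℝ :=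
  solidH (lIdx i : ℤ) (muIdx i) p *
    jacobiP γ (lIdx i : ℝ) (nIdx i : ℤ) (2 * (p.1 ^ 2 + p.2 ^ 2) - 1)

/-- Partial derivative in `x`. -/
def pdx (f : ℝ × ℝ → ℝ) : ℝ × ℝ → ℝ := fun p => fderiv ℝ f p (1, 0)
/-- Partial derivative in `y`. -/
def pdy (f : ℝ × ℝ → ℝ) : ℝ × ℝ → ℝ := fun p => fderiv ℝ f p (0, 1)

/-- `C_{l,μ}`. -/
def Cc (l : ℕ) : ℝ := if l = 0 then Real.pi / 2 else Real.pi

/-- Objective functional in the modified K-functional. -/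
def objVal (γ : ℝ) (k m : ℕ) (t : ℝ) (u v : IdxI → ℝ) : ℝ :=
  ∑' i : IdxI, (wt (k : ℝ) i * (u i - v i) ^ 2 + t ^ 2 * wt (m : ℝ) i * v i ^ 2) * hh γ i ^ 2

/-- Admissibility: `v ∈ H̃^m_γ`. -/
def admissible (γ : ℝ) (m : ℕ) (v : IdxI → ℝ) : Prop :=
  Summable fun i : IdxI => wt (m : ℝ) i * v i ^ 2 * hh γ i ^ 2

/-- The squared modified K-functional `K̃(t,u)²`. -/
def KtSq (γ : ℝ) (k m : ℕ) (u : IdxI → ℝ) (t : ℝ) : ℝ :=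
  sInf {S : ℝ | ∃ v : IdxI → ℝ, admissible γ m v ∧ S = objVal γ k m t u v}

/-- Pseudo-eigenvalue `λ_{l,n}` of the fractional Laplacian. -/
def lamFL (α : ℝ) (l n : ℕ) : ℝ :=
  (2 : ℝ) ^ α * Real.Gamma ((n : ℝ) + 1 + α / 2) *
      Real.Gamma ((n : ℝ) + (l : ℝ) + 1 + α / 2) /
    (Real.Gamma ((n : ℝ) + 1) * Real.Gamma ((n : ℝ) + (l : ℝ) + 1))

/-- Euclidean norm on `ℝ²` (as `ℝ × ℝ`). -/
def enorm2 (p : ℝ × ℝ) : ℝ := Real.sqrt (p.1 ^ 2 + p.2 ^ 2)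


private lemma aux_quad_lb {A B : ℝ} (hA : 0 ≤ A) (hB : 0 ≤ B) (x v : ℝ) :
    A * B * x ^ 2 / (A + B) ≤ A * (x - v) ^ 2 + B * v ^ 2 := by
  rcases eq_or_lt_of_le (add_nonneg hA hB) with h | h
  · have hA0 : A = 0 := by linarith
    have hB0 : B = 0 := by linarith
    simp [hA0, hB0]
  · rw [div_le_iff₀ h]
    nlinarith [sq_nonneg (A * (x - v) - B * v)]

private lemma aux_quad_eq {A B : ℝ} (hA : 0 ≤ A) (hB : 0 ≤ B) (x : ℝ) :
    A * (x - A * x / (A + B)) ^ 2 + B * (A * x / (A + B)) ^ 2 = A * B * x ^ 2 / (A + B) := by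
  rcases eq_or_lt_of_le (add_nonneg hA hB) with h | h
  · have hA0 : A = 0 := by linarith
    have hB0 : B = 0 := by linarith
    simp [hA0, hB0]
  · have hne : A + B ≠ 0 := h.ne'
    field_simp
    ring

private lemma aux_quad_le {A B : ℝ} (hA : 0 ≤ A) (hB : 0 ≤ B) (x : ℝ) :
    A * B * x ^ 2 / (A + B) ≤ A * x ^ 2 := by
  rcases eq_or_lt_of_le (add_nonneg hA hB) with h | h
  · rw [← h]
    simp
    positivity
  · rw [div_le_iff₀ h]
    nlinarith [mul_nonneg hA (sq_nonneg x), mul_nonneg (mul_nonneg hA hA) (sq_nonneg x)]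

private lemma aux_quad_bd {A B : ℝ} (hA : 0 ≤ A) (hB : 0 ≤ B) (x : ℝ) :
    B * (A * x / (A + B)) ^ 2 ≤ A * x ^ 2 := by
  rcases eq_or_lt_of_le (add_nonneg hA hB) with h | h
  · have hA0 : A = 0 := by linarith
    have hB0 : B = 0 := by linarith
    simp [hA0, hB0]
  · rw [div_pow, ← mul_div_assoc, div_le_iff₀ (by positivity)]
    nlinarith [mul_nonneg (mul_nonneg hA hA) (mul_nonneg hB (sq_nonneg x)),
      mul_nonneg (mul_nonneg hA hA) (mul_nonneg hA (sq_nonneg x)),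
      mul_nonneg (mul_nonneg hA hB) (mul_nonneg hB (sq_nonneg x))]

private lemma rpow_aemeas (c : ℝ) :
    AEMeasurable (fun t : ℝ => t ^ c) (volume.restrict (Set.Ioi 0)) := by
  refine AEMeasurable.congr (f := fun t => Real.exp (Real.log t * c)) ?_ ?_
  · exact (Real.measurable_exp.comp (Real.measurable_log.mul_const c)).aemeasurable
  · rw [Filter.EventuallyEq, ae_restrict_iff' measurableSet_Ioi]
    filter_upwards with t ht
    rw [Real.rpow_def_of_pos ht]

private lemma G_integrable {θ : ℝ} (hθ1 : 0 < θ) (hθ2 : θ < 1) :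
    IntegrableOn (fun τ : ℝ => τ ^ (1 - 2 * θ) / (1 + τ ^ 2)) (Set.Ioi 0) := by
  have hmeas : AEStronglyMeasurable (fun τ : ℝ => τ ^ (1 - 2 * θ) / (1 + τ ^ 2))
      (volume.restrict (Set.Ioi 0)) := by
    exact ((rpow_aemeas _).div ((measurable_const.add
      (measurable_id.pow_const 2)).aemeasurable)).aestronglyMeasurable
  rw [← Set.Ioc_union_Ioi_eq_Ioi (zero_le_one (α := ℝ))]
  apply IntegrableOn.union
  · have hb : IntegrableOn (fun τ : ℝ => τ ^ (1 - 2 * θ)) (Set.Ioc 0 1) := by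
      rw [integrableOn_Ioc_iff_integrableOn_Ioo]
      exact (intervalIntegral.integrableOn_Ioo_rpow_iff zero_lt_one).2 (by linarith)
    apply hb.mono' (hmeas.mono_measure (Measure.restrict_mono Set.Ioc_subset_Ioi_self le_rfl))
    rw [ae_restrict_iff' measurableSet_Ioc]
    filter_upwards with τ hτ
    have h0 : 0 ≤ τ ^ (1 - 2 * θ) := Real.rpow_nonneg hτ.1.le _
    rw [Real.norm_eq_abs, abs_of_nonneg (div_nonneg h0 (by positivity))]
    exact div_le_self h0 (by nlinarith [sq_nonneg τ])
  · apply (integrableOn_Ioi_rpow_of_lt (show (-1 - 2*θ) < -1 by linarith) zero_lt_one).mono'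
      (hmeas.mono_measure (Measure.restrict_mono (Set.Ioi_subset_Ioi zero_le_one) le_rfl))
    rw [ae_restrict_iff' measurableSet_Ioi]
    filter_upwards with τ hτ
    have hτ0 : (0:ℝ) < τ := lt_trans zero_lt_one hτ
    have h0 : 0 ≤ τ ^ (1 - 2 * θ) := Real.rpow_nonneg hτ0.le _
    rw [Real.norm_eq_abs, abs_of_nonneg (div_nonneg h0 (by positivity))]
    have h2 : τ ^ (-1 - 2*θ) = τ ^ (1 - 2*θ) / τ ^ (2:ℕ) := by
      rw [← Real.rpow_natCast τ 2, ← Real.rpow_sub hτ0]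
      push_cast
      ring_nf
    rw [h2]
    apply div_le_div_of_nonneg_left h0 (by positivity)
    nlinarith [sq_nonneg τ]

private lemma G_pos {θ : ℝ} (hθ1 : 0 < θ) (hθ2 : θ < 1) :
    0 < ∫ τ in Set.Ioi (0:ℝ), τ ^ (1 - 2 * θ) / (1 + τ ^ 2) := by
  have hnn : 0 ≤ᵐ[volume.restrict (Set.Ioi (0:ℝ))]
      fun τ : ℝ => τ ^ (1 - 2 * θ) / (1 + τ ^ 2) := by
    rw [Filter.EventuallyLE, ae_restrict_iff' measurableSet_Ioi]
    filter_upwards with τ hτ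
    exact le_of_lt (div_pos (Real.rpow_pos_of_pos hτ _) (by positivity))
  rw [setIntegral_pos_iff_support_of_nonneg_ae hnn (G_integrable hθ1 hθ2)]
  refine lt_of_lt_of_le ?_ (measure_mono (show Set.Ioi (0:ℝ) ⊆ _ ∩ Set.Ioi 0 from ?_))
  · rw [Real.volume_Ioi]; exact ENNReal.zero_lt_top
  · intro τ hτ
    exact ⟨ne_of_gt (div_pos (Real.rpow_pos_of_pos hτ _) (by positivity)), hτ⟩

private lemma aux_main {θ : ℝ} (hθ1 : 0 < θ) (hθ2 : θ < 1) {a b : ℝ}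
    (ha : 0 < a) (hb : 0 < b) (x : ℝ) :
    ∫⁻ t in Set.Ioi (0:ℝ), ENNReal.ofReal (x ^ 2 * (a * b) * t ^ (1 - 2 * θ) / (a + b * t ^ 2)) =
      ENNReal.ofReal (∫ τ in Set.Ioi (0:ℝ), τ ^ (1 - 2 * θ) / (1 + τ ^ 2)) *
        ENNReal.ofReal (x ^ 2 * (a ^ (1 - θ) * b ^ θ)) := by
  set lam : ℝ := (a / b) ^ ((1:ℝ)/2) with hlamdef
  have hab : (0:ℝ) < a / b := div_pos ha hb
  have hlam : 0 < lam := Real.rpow_pos_of_pos hab _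
  have hlam2 : lam ^ 2 = a / b := by
    rw [hlamdef, ← Real.rpow_natCast ((a/b) ^ ((1:ℝ)/2)) 2, ← Real.rpow_mul hab.le]
    norm_num
  have key : ∀ t : ℝ, 0 < t →
      x ^ 2 * (a * b) * t ^ (1 - 2 * θ) / (a + b * t ^ 2) =
      (x ^ 2 * b * lam ^ (1 - 2 * θ)) *
        ((lam⁻¹ * t) ^ (1 - 2 * θ) / (1 + (lam⁻¹ * t) ^ 2)) := by
    intro t ht
    have h1 : (lam⁻¹ * t) ^ (1 - 2 * θ) = lam⁻¹ ^ (1 - 2 * θ) * t ^ (1 - 2 * θ) :=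
      Real.mul_rpow (inv_nonneg.2 hlam.le) ht.le
    have h2 : lam⁻¹ ^ (1 - 2 * θ) = (lam ^ (1 - 2 * θ))⁻¹ := Real.inv_rpow hlam.le _
    have h3 : (0:ℝ) < lam ^ (1 - 2 * θ) := Real.rpow_pos_of_pos hlam _
    have h4 : (lam⁻¹ * t) ^ 2 = b / a * t ^ 2 := by
      rw [mul_pow, inv_pow, hlam2]
      rw [inv_div]
    have hden : (0:ℝ) < a + b * t ^ 2 := by positivity
    have hden2 : (0:ℝ) < 1 + b / a * t ^ 2 := by positivity
    rw [h1, h2, h4]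
    field_simp
  have hG := G_integrable hθ1 hθ2
  have hGc : IntegrableOn (fun t => (lam⁻¹ * t) ^ (1 - 2 * θ) / (1 + (lam⁻¹ * t) ^ 2))
      (Set.Ioi 0) := by
    have := (integrableOn_Ioi_comp_mul_left_iff
      (fun τ : ℝ => τ ^ (1 - 2 * θ) / (1 + τ ^ 2)) 0 (inv_pos.2 hlam))
    rw [mul_zero] at this
    exact this.2 hG
  have hH : IntegrableOn (fun t => (x ^ 2 * b * lam ^ (1 - 2 * θ)) *
      ((lam⁻¹ * t) ^ (1 - 2 * θ) / (1 + (lam⁻¹ * t) ^ 2))) (Set.Ioi 0) :=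
    hGc.const_mul _
  have hFint : IntegrableOn
      (fun t => x ^ 2 * (a * b) * t ^ (1 - 2 * θ) / (a + b * t ^ 2)) (Set.Ioi 0) := by
    apply hH.congr_fun (fun t ht => (key t ht).symm) measurableSet_Ioi
  have hFnn : 0 ≤ᵐ[volume.restrict (Set.Ioi (0:ℝ))]
      fun t => x ^ 2 * (a * b) * t ^ (1 - 2 * θ) / (a + b * t ^ 2) := by
    rw [Filter.EventuallyLE, ae_restrict_iff' measurableSet_Ioi]
    filter_upwards with t ht
    have : 0 ≤ t ^ (1 - 2 * θ) := Real.rpow_nonneg ht.le _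
    positivity
  rw [← ofReal_integral_eq_lintegral_ofReal hFint hFnn]
  rw [setIntegral_congr_fun measurableSet_Ioi (fun t ht => key t ht)]
  rw [integral_const_mul]
  have hsub := integral_comp_mul_left_Ioi
    (fun τ : ℝ => τ ^ (1 - 2 * θ) / (1 + τ ^ 2)) 0 (inv_pos.2 hlam)
  rw [mul_zero] at hsub
  rw [hsub, inv_inv, smul_eq_mul]
  have hC0 : 0 ≤ ∫ τ in Set.Ioi (0:ℝ), τ ^ (1 - 2 * θ) / (1 + τ ^ 2) := by
    apply setIntegral_nonneg measurableSet_Ioi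
    intro τ hτ
    exact div_nonneg (Real.rpow_nonneg (le_of_lt hτ) _) (by positivity)
  have hcl : x ^ 2 * b * lam ^ (1 - 2 * θ) * lam = x ^ 2 * (a ^ (1 - θ) * b ^ θ) := by
    have h5 : lam ^ (1 - 2 * θ) * lam = lam ^ (2 - 2 * θ) := by
      nth_rewrite 2 [← Real.rpow_one lam]
      rw [← Real.rpow_add hlam]
      ring_nf
    have h6 : lam ^ (2 - 2 * θ) = (a / b) ^ (1 - θ) := by
      rw [hlamdef, ← Real.rpow_mul hab.le]
      norm_num
      ring_nf
    have hbθ : b ^ θ * b ^ (1 - θ) = b := by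
      rw [← Real.rpow_add hb, show θ + (1 - θ) = (1:ℝ) by ring, Real.rpow_one]
    have h7 : (a / b) ^ (1 - θ) * b = a ^ (1 - θ) * b ^ θ := by
      rw [Real.div_rpow ha.le hb.le, div_mul_eq_mul_div,
        div_eq_iff (Real.rpow_pos_of_pos hb (1 - θ)).ne', mul_assoc, hbθ]
    rw [mul_assoc, h5, h6]
    rw [← h7]
    ring
  rw [show x ^ 2 * b * lam ^ (1 - 2 * θ) *
      (lam * ∫ τ in Set.Ioi (0:ℝ), τ ^ (1 - 2 * θ) / (1 + τ ^ 2)) =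
      (∫ τ in Set.Ioi (0:ℝ), τ ^ (1 - 2 * θ) / (1 + τ ^ 2)) *
      (x ^ 2 * b * lam ^ (1 - 2 * θ) * lam) by ring, hcl,
    ENNReal.ofReal_mul hC0]

private lemma wt_pos (sg : ℝ) (i : IdxI) : 0 < wt sg i := by
  unfold wt
  have h1 : (0:ℝ) < (nIdx i : ℝ) + 1 := by positivity
  have h2 : (0:ℝ) < (nIdx i : ℝ) + (lIdx i : ℝ) + 1 := by positivity
  exact mul_pos (Real.rpow_pos_of_pos h1 _) (Real.rpow_pos_of_pos h2 _)

private lemma wt_mono {k m : ℕ} (hkm : k ≤ m) (i : IdxI) : wt (k:ℝ) i ≤ wt (m:ℝ) i := by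
  unfold wt
  have hn : (0:ℝ) ≤ (nIdx i : ℝ) := Nat.cast_nonneg _
  have hl : (0:ℝ) ≤ (lIdx i : ℝ) := Nat.cast_nonneg _
  have h1 : (1:ℝ) ≤ (nIdx i : ℝ) + 1 := by linarith
  have h2 : (1:ℝ) ≤ (nIdx i : ℝ) + (lIdx i : ℝ) + 1 := by linarith
  have hk : (k:ℝ) ≤ (m:ℝ) := Nat.cast_le.2 hkm
  exact mul_le_mul (Real.rpow_le_rpow_of_exponent_le h1 hk)
    (Real.rpow_le_rpow_of_exponent_le h2 hk)
    (Real.rpow_nonneg (by linarith) _) (Real.rpow_nonneg (by linarith) _)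

private lemma wt_interp (k m : ℕ) (θ s : ℝ) (hs : s = (1 - θ) * k + θ * m) (i : IdxI) :
    wt (k:ℝ) i ^ (1 - θ) * wt (m:ℝ) i ^ θ = wt s i := by
  unfold wt
  have hα : (0:ℝ) < (nIdx i : ℝ) + 1 := by positivity
  have hβ : (0:ℝ) < (nIdx i : ℝ) + (lIdx i : ℝ) + 1 := by positivity
  rw [Real.mul_rpow (Real.rpow_nonneg hα.le _) (Real.rpow_nonneg hβ.le _),
    Real.mul_rpow (Real.rpow_nonneg hα.le _) (Real.rpow_nonneg hβ.le _),
    ← Real.rpow_mul hα.le, ← Real.rpow_mul hβ.le, ← Real.rpow_mul hα.le, ← Real.rpow_mul hβ.le,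
    mul_mul_mul_comm, ← Real.rpow_add hα, ← Real.rpow_add hβ,
    show (k:ℝ) * (1 - θ) + (m:ℝ) * θ = s by rw [hs]; ring]

private def Afun (γ : ℝ) (k : ℕ) (i : IdxI) : ℝ := wt (k:ℝ) i * hh γ i ^ 2

private lemma Afun_nonneg (γ : ℝ) (k : ℕ) (i : IdxI) : 0 ≤ Afun γ k i :=
  mul_nonneg (wt_pos _ _).le (sq_nonneg _)

private def gfun (γ : ℝ) (k m : ℕ) (u : IdxI → ℝ) (t : ℝ) (i : IdxI) : ℝ :=
  Afun γ k i * (t ^ 2 * Afun γ m i) * u i ^ 2 / (Afun γ k i + t ^ 2 * Afun γ m i)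

private lemma gfun_nonneg (γ : ℝ) (k m : ℕ) (u : IdxI → ℝ) (t : ℝ) (i : IdxI) :
    0 ≤ gfun γ k m u t i := by
  have h1 := Afun_nonneg γ k i
  have h2 := Afun_nonneg γ m i
  unfold gfun
  positivity

private lemma summable_AfU (γ : ℝ) (k : ℕ) (u : IdxI → ℝ)
    (hu : Summable fun i : IdxI => wt (k:ℝ) i * u i ^ 2 * hh γ i ^ 2) :
    Summable fun i => Afun γ k i * u i ^ 2 :=
  hu.congr (fun i => by unfold Afun; ring)

private lemma summable_gfun (γ : ℝ) (k m : ℕ) (u : IdxI → ℝ)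
    (hu : Summable fun i : IdxI => wt (k:ℝ) i * u i ^ 2 * hh γ i ^ 2) (t : ℝ) :
    Summable (gfun γ k m u t) := by
  refine Summable.of_nonneg_of_le (gfun_nonneg γ k m u t) (fun i => ?_)
    (summable_AfU γ k u hu)
  show gfun γ k m u t i ≤ Afun γ k i * u i ^ 2
  unfold gfun
  exact aux_quad_le (Afun_nonneg γ k i) (mul_nonneg (sq_nonneg t) (Afun_nonneg γ m i)) (u i)

private lemma KtSq_eq (γ : ℝ) (k m : ℕ) (hkm : k ≤ m) (u : IdxI → ℝ)
    (hu : Summable fun i : IdxI => wt (k:ℝ) i * u i ^ 2 * hh γ i ^ 2)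
    {t : ℝ} (ht : 0 < t) :
    KtSq γ k m u t = ∑' i, gfun γ k m u t i := by
  have hA : ∀ i, 0 ≤ Afun γ k i := Afun_nonneg γ k
  have hB : ∀ i, 0 ≤ t ^ 2 * Afun γ m i := fun i =>
    mul_nonneg (sq_nonneg t) (Afun_nonneg γ m i)
  have huA := summable_AfU γ k u hu
  have hgsum := summable_gfun γ k m u hu t
  have term_eq : ∀ (v : IdxI → ℝ) (i : IdxI),
      (wt (k:ℝ) i * (u i - v i) ^ 2 + t ^ 2 * wt (m:ℝ) i * v i ^ 2) * hh γ i ^ 2 =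
      Afun γ k i * (u i - v i) ^ 2 + (t ^ 2 * Afun γ m i) * v i ^ 2 := by
    intro v i; unfold Afun; ring
  have term_nonneg : ∀ (v : IdxI → ℝ) (i : IdxI),
      0 ≤ (wt (k:ℝ) i * (u i - v i) ^ 2 + t ^ 2 * wt (m:ℝ) i * v i ^ 2) * hh γ i ^ 2 := by
    intro v i
    exact mul_nonneg (add_nonneg (mul_nonneg (wt_pos _ _).le (sq_nonneg _))
      (mul_nonneg (mul_nonneg (sq_nonneg t) (wt_pos _ _).le) (sq_nonneg _))) (sq_nonneg _)
  apply le_antisymm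
  · set vstar : IdxI → ℝ :=
      fun i => Afun γ k i * u i / (Afun γ k i + t ^ 2 * Afun γ m i) with hvdef
    have hadm : admissible γ m vstar := by
      refine Summable.of_nonneg_of_le
        (fun i => mul_nonneg (mul_nonneg (wt_pos _ _).le (sq_nonneg _)) (sq_nonneg _))
        (fun i => ?_) (huA.mul_left (t ^ 2)⁻¹)
      have hb := aux_quad_bd (hA i) (hB i) (u i)
      have ht2 : (t:ℝ) ≠ 0 := ht.ne'
      have he : wt (m:ℝ) i * vstar i ^ 2 * hh γ i ^ 2 =
          (t ^ 2)⁻¹ * ((t ^ 2 * Afun γ m i) * vstar i ^ 2) := by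
        unfold Afun
        field_simp
      rw [he]
      exact mul_le_mul_of_nonneg_left hb (by positivity)
    apply csInf_le
    · refine ⟨0, fun S hS => ?_⟩
      obtain ⟨v, hv', rfl⟩ := hS
      exact tsum_nonneg (term_nonneg v)
    · refine ⟨vstar, hadm, ?_⟩
      unfold objVal
      refine tsum_congr (fun i => ?_)
      rw [term_eq vstar i]
      show gfun γ k m u t i = _
      unfold gfun
      exact (aux_quad_eq (hA i) (hB i) (u i)).symm
  · apply le_csInf
    · refine ⟨objVal γ k m t u 0, 0, ?_, rfl⟩
      unfold admissible
      simpa using summable_zero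
    · rintro S ⟨v, hvadm, rfl⟩
      unfold objVal
      refine hgsum.tsum_le_tsum (fun i => ?_) ?_
      · rw [term_eq v i]
        show gfun γ k m u t i ≤ _
        unfold gfun
        exact aux_quad_lb (hA i) (hB i) (u i) (v i)
      · refine Summable.of_nonneg_of_le (term_nonneg v) (fun i => ?_)
          ((hu.mul_left 2).add (hvadm.mul_left (2 + t ^ 2)))
        have hw := wt_mono hkm i
        have h1 : wt (k:ℝ) i * (u i - v i) ^ 2 * hh γ i ^ 2 ≤
            2 * (wt (k:ℝ) i * u i ^ 2 * hh γ i ^ 2) +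
            2 * (wt (k:ℝ) i * v i ^ 2 * hh γ i ^ 2) := by
          nlinarith [mul_nonneg (mul_nonneg (wt_pos (k:ℝ) i).le (sq_nonneg (u i + v i)))
            (sq_nonneg (hh γ i))]
        have h2 : wt (k:ℝ) i * v i ^ 2 * hh γ i ^ 2 ≤
            wt (m:ℝ) i * v i ^ 2 * hh γ i ^ 2 :=
          mul_le_mul_of_nonneg_right (mul_le_mul_of_nonneg_right hw (sq_nonneg _)) (sq_nonneg _)
        nlinarith [h1, h2, mul_nonneg (mul_nonneg (mul_nonneg (sq_nonneg t) (wt_pos (m:ℝ) i).le)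
          (sq_nonneg (v i))) (sq_nonneg (hh γ i))]

/-- the modified K-functional norm identity giving that `H̃^s_γ` is an
interpolation space: `∫₀^∞ t^{-1-2θ} K̃(t,u)² dt = C_θ² Σ (n+1)^s (n+l+1)^s u² h²`,
with `C_θ² = ∫₀^∞ τ^{1-2θ}/(1+τ²) dτ` finite and positive. -/
theorem stmt0 (γ : ℝ) (hγ : 0 ≤ γ) (k m : ℕ) (hkm : k < m)
    (θ : ℝ) (hθ : θ ∈ Set.Ioo (0 : ℝ) 1) (s : ℝ) (hs : s = (1 - θ) * k + θ * m)
    (u : IdxI → ℝ) (hu : Summable fun i : IdxI => wt (k : ℝ) i * u i ^ 2 * hh γ i ^ 2) :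
    MeasureTheory.IntegrableOn (fun τ : ℝ => τ ^ (1 - 2 * θ) / (1 + τ ^ 2)) (Set.Ioi 0) ∧
    0 < (∫ τ in Set.Ioi (0 : ℝ), τ ^ (1 - 2 * θ) / (1 + τ ^ 2)) ∧
    (∫⁻ t in Set.Ioi (0 : ℝ), ENNReal.ofReal (t ^ (-1 - 2 * θ) * KtSq γ k m u t)) =
      ENNReal.ofReal (∫ τ in Set.Ioi (0 : ℝ), τ ^ (1 - 2 * θ) / (1 + τ ^ 2)) *
        ∑' i : IdxI, ENNReal.ofReal (wt s i * u i ^ 2 * hh γ i ^ 2) := by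
  obtain ⟨hθ1, hθ2⟩ := hθ
  refine ⟨G_integrable hθ1 hθ2, G_pos hθ1 hθ2, ?_⟩
  have hKt : ∀ t ∈ Set.Ioi (0:ℝ),
      ENNReal.ofReal (t ^ (-1 - 2 * θ) * KtSq γ k m u t) =
      ∑' i : IdxI, ENNReal.ofReal (t ^ (-1 - 2 * θ) * gfun γ k m u t i) := by
    intro t ht
    rw [KtSq_eq γ k m hkm.le u hu ht, ← tsum_mul_left]
    exact ENNReal.ofReal_tsum_of_nonneg
      (fun i => mul_nonneg (Real.rpow_nonneg (le_of_lt ht) _) (gfun_nonneg γ k m u t i))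
      ((summable_gfun γ k m u hu t).mul_left _)
  rw [setLIntegral_congr_fun measurableSet_Ioi hKt]
  have hmeas : ∀ i : IdxI, AEMeasurable
      (fun t : ℝ => ENNReal.ofReal (t ^ (-1 - 2 * θ) * gfun γ k m u t i))
      (volume.restrict (Set.Ioi 0)) := by
    intro i
    apply ENNReal.measurable_ofReal.comp_aemeasurable
    apply AEMeasurable.mul (rpow_aemeas _)
    have hg : Measurable fun t : ℝ => gfun γ k m u t i := by
      unfold gfun
      exact ((measurable_const.mul ((measurable_id.pow_const 2).mul
        measurable_const)).mul measurable_const).div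
        (measurable_const.add ((measurable_id.pow_const 2).mul measurable_const))
    exact hg.aemeasurable
  rw [lintegral_tsum hmeas, ← ENNReal.tsum_mul_left]
  refine tsum_congr (fun i => ?_)
  rcases eq_or_lt_of_le (sq_nonneg (hh γ i)) with hc | hc
  · have hgz : ∀ t : ℝ, gfun γ k m u t i = 0 := by
      intro t
      unfold gfun Afun
      rw [← hc]
      simp
    simp only [hgz, mul_zero, ENNReal.ofReal_zero, lintegral_zero]
    rw [← hc]
    simp
  · have ha : 0 < Afun γ k i := mul_pos (wt_pos _ _) hc
    have hb : 0 < Afun γ m i := mul_pos (wt_pos _ _) hc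
    have hrw : ∀ t ∈ Set.Ioi (0:ℝ),
        ENNReal.ofReal (t ^ (-1 - 2 * θ) * gfun γ k m u t i) =
        ENNReal.ofReal (u i ^ 2 * (Afun γ k i * Afun γ m i) * t ^ (1 - 2 * θ) /
          (Afun γ k i + Afun γ m i * t ^ 2)) := by
      intro t ht
      congr 1
      have h2 : t ^ (-1 - 2 * θ) * t ^ (2:ℕ) = t ^ (1 - 2 * θ) := by
        rw [← Real.rpow_natCast t 2, ← Real.rpow_add ht]
        push_cast
        ring_nf
      unfold gfun
      rw [show Afun γ k i + t ^ 2 * Afun γ m i = Afun γ k i + Afun γ m i * t ^ 2 by ring,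
        ← mul_div_assoc]
      congr 1
      linear_combination (Afun γ k i * Afun γ m i * u i ^ 2) * h2
    rw [setLIntegral_congr_fun measurableSet_Ioi hrw]
    rw [aux_main hθ1 hθ2 ha hb (u i)]
    congr 1
    have hib : Afun γ k i ^ (1 - θ) * Afun γ m i ^ θ = wt s i * hh γ i ^ 2 := by
      unfold Afun
      rw [Real.mul_rpow (wt_pos _ _).le (sq_nonneg _),
        Real.mul_rpow (wt_pos _ _).le (sq_nonneg _), mul_mul_mul_comm,
        wt_interp k m θ s hs i, ← Real.rpow_add hc, show (1 - θ) + θ = (1:ℝ) by ring,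
        Real.rpow_one]
    rw [hib, show u i ^ 2 * (wt s i * hh γ i ^ 2) = wt s i * u i ^ 2 * hh γ i ^ 2 by ring]
end
end

section
/- Let α > 0, set γ = α/2, and for integers l,n ≥ 0 set λ_{l,n} := 2^α Γ(n+1+α/2) Γ(n+l+1+α/2) / (Γ(n+1) Γ(n+l+1)). For every s ∈ ℝ there exist constants 0 < C₀ ≤ C₁, depending only on α, such that for every family of real numbers (a_{l,n,μ})_{(l,n,μ)∈I}: C₀ · Σ_{(l,n,μ)∈I} (n+1)^s (n+l+1)^s a_{l,n,μ}² h_{l,n}² ≤ Σ_{(l,n,μ)∈I} (n+1)^{s−α} (n+l+1)^{s−α} λ_{l,n}² a_{l,n,μ}² h_{l,n}² ≤ C₁ · Σ_{(l,n,μ)∈I} (n+1)^s (n+l+1)^s a_{l,n,μ}² h_{l,n}² (all sums taken in [0,∞]). Consequently the map sending the coefficient family (a_{l,n,μ}) of ũ = (1−r²)^{α/2} Σ a 𝒱 P to the coefficient family (λ_{l,n} a_{l,n,μ}) of (−Δ)^{α/2} ũ is bounded from the coefficient space with weight (n+1)^s(n+l+1)^s onto the coefficient space with weight (n+1)^{s−α}(n+l+1)^{s−α},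 with bounded inverse. -/
open MeasureTheory

noncomputable section

theorem gammaLogConv (a b t : ℝ) (ha : 0 < a) (hb : 0 < b) (ht0 : 0 ≤ t) (ht1 : t ≤ 1) :
    Real.Gamma (t*a + (1-t)*b) ≤ Real.Gamma a ^ t * Real.Gamma b ^ (1-t) := by
  have h := Real.convexOn_log_Gamma.2 (Set.mem_Ioi.2 ha) (Set.mem_Ioi.2 hb) ht0
    (by linarith : (0:ℝ) ≤ 1 - t) (by ring)
  simp only [smul_eq_mul, Function.comp_apply] at h
  have hab : 0 < t*a + (1-t)*b := by
    rcases eq_or_lt_of_le ht0 with h0 | h0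
    · simp [← h0]; linarith
    · nlinarith [mul_pos h0 ha, mul_nonneg (sub_nonneg.2 ht1) hb.le]
  rw [Real.rpow_def_of_pos (Real.Gamma_pos_of_pos ha),
    Real.rpow_def_of_pos (Real.Gamma_pos_of_pos hb), ← Real.exp_add]
  calc Real.Gamma (t*a+(1-t)*b) = Real.exp (Real.log (Real.Gamma (t*a+(1-t)*b))) :=
        (Real.exp_log (Real.Gamma_pos_of_pos hab)).symm
    _ ≤ _ := Real.exp_le_exp.2 (by linarith)

theorem gammaProd (x : ℝ) (hx : 0 < x) (N : ℕ) :
    Real.Gamma (x + N) = Real.Gamma x * ∏ j ∈ Finset.range N, (x + j) := by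
  induction N with
  | zero => simp
  | succ n ih =>
    have hxn : 0 < x + n := by positivity
    have : Real.Gamma (x + (n+1:ℕ)) = (x + n) * Real.Gamma (x + n) := by
      rw [show (x + (n+1:ℕ)) = (x + n) + 1 by push_cast; ring, Real.Gamma_add_one (ne_of_gt hxn)]
    rw [this, ih, Finset.prod_range_succ]; ring

theorem prodLB (x : ℝ) (hx : 0 < x) (N : ℕ) :
    x ^ N ≤ ∏ j ∈ Finset.range N, (x + j) := by
  calc x ^ N = ∏ _j ∈ Finset.range N, x := by rw [Finset.prod_const, Finset.card_range]
    _ ≤ _ := Finset.prod_le_prod (fun i _ => hx.le) (fun i _ => by have := (Nat.cast_nonneg i : (0:ℝ) ≤ i); linarith)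

theorem prodUB (x : ℝ) (hx : 0 < x) (N : ℕ) (B : ℝ) (hB : x + N ≤ B) :
    ∏ j ∈ Finset.range N, (x + j) ≤ B ^ N := by
  calc (∏ j ∈ Finset.range N, (x + j)) ≤ ∏ _j ∈ Finset.range N, B := by
        refine Finset.prod_le_prod (fun i _ => by have := (Nat.cast_nonneg i : (0:ℝ) ≤ i); linarith) (fun i hi => ?_)
        have : (i:ℝ) ≤ N := by exact_mod_cast (Finset.mem_range.1 hi).le
        linarith
    _ = B ^ N := by rw [Finset.prod_const, Finset.card_range]

theorem combRpow (G P : ℝ) (hG : 0 < G) (hP : 0 ≤ P) (t : ℝ) :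
    (G * P) ^ t * G ^ (1 - t) = G * P ^ t := by
  rw [Real.mul_rpow hG.le hP, mul_right_comm, ← Real.rpow_add hG]
  norm_num

/-- Gamma ratio bounds: `c x^γ Γ(x) ≤ Γ(x+γ) ≤ C x^γ Γ(x)` for `x ≥ 1`. -/
theorem grBounds (γ : ℝ) (hγ : 0 < γ) :
    ∃ c C : ℝ, 0 < c ∧ 0 < C ∧ ∀ x : ℝ, 1 ≤ x →
      c * x ^ γ * Real.Gamma x ≤ Real.Gamma (x + γ) ∧
      Real.Gamma (x + γ) ≤ C * x ^ γ * Real.Gamma x := by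
  set N : ℕ := ⌈γ⌉₊ with hN
  have hN1 : 1 ≤ N := Nat.one_le_ceil_iff.2 hγ
  have hγN : γ ≤ N := Nat.le_ceil γ
  have hNpos : (0:ℝ) < N := by exact_mod_cast hN1
  refine ⟨(1 + γ + N) ^ (γ - N), (1 + N : ℝ) ^ γ, by positivity, by positivity, fun x hx => ?_⟩
  have hx0 : 0 < x := lt_of_lt_of_le one_pos hx
  have hΓx : 0 < Real.Gamma x := Real.Gamma_pos_of_pos hx0
  have hΓxγ : 0 < Real.Gamma (x + γ) := Real.Gamma_pos_of_pos (by linarith)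
  constructor
  · -- lower bound
    set t : ℝ := (N - γ) / N with ht
    have ht0 : 0 ≤ t := by apply div_nonneg <;> linarith
    have ht1 : t ≤ 1 := by rw [div_le_one hNpos]; linarith
    have hcomb : t * (x + γ + N) + (1 - t) * (x + γ) = x + N := by
      have htN : t * N = N - γ := by rw [ht, div_mul_cancel₀ _ hNpos.ne']
      linear_combination htN
    have key := gammaLogConv (x+γ+N) (x+γ) t (by linarith) (by linarith) ht0 ht1
    rw [hcomb] at key
    have hub : Real.Gamma (x+γ+N) ≤ Real.Gamma (x+γ) * ((1+γ+N)*x) ^ N := by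
      rw [show x+γ+(N:ℝ) = (x+γ)+(N:ℝ) by ring, gammaProd (x+γ) (by linarith) N]
      refine mul_le_mul_of_nonneg_left (prodUB _ (by linarith) _ _ ?_) hΓxγ.le
      nlinarith
    have hBpos : (0:ℝ) < (1+γ+N)*x := by positivity
    have key2 : Real.Gamma (x+N) ≤ Real.Gamma (x+γ) * ((1+γ+N)*x) ^ ((N:ℝ) - γ) := by
      calc Real.Gamma (x+N) ≤ Real.Gamma (x+γ+N) ^ t * Real.Gamma (x+γ) ^ (1-t) := key
        _ ≤ (Real.Gamma (x+γ) * ((1+γ+N)*x) ^ N) ^ t * Real.Gamma (x+γ) ^ (1-t) := by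
            gcongr
        _ = Real.Gamma (x+γ) * (((1+γ+N)*x) ^ (N:ℕ)) ^ t := combRpow _ _ hΓxγ (by positivity) t
        _ = Real.Gamma (x+γ) * ((1+γ+N)*x) ^ ((N:ℝ) - γ) := by
            rw [← Real.rpow_natCast ((1+γ+N)*x) N, ← Real.rpow_mul hBpos.le,
              show (N:ℝ) * t = (N:ℝ) - γ by rw [ht, mul_comm, div_mul_cancel₀ _ hNpos.ne']]
    have hlow : Real.Gamma x * x ^ N ≤ Real.Gamma (x+N) := by
      rw [gammaProd x hx0 N]
      exact mul_le_mul_of_nonneg_left (prodLB x hx0 N) hΓx.le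
    have hmono : ((1+γ+N)*x) ^ ((N:ℝ)-γ) ≤ ((1+γ+N):ℝ)^((N:ℝ)-γ) * x ^ ((N:ℝ)-γ) := by
      rw [Real.mul_rpow (by positivity) hx0.le]
    have hfin : Real.Gamma x * x ^ (N:ℕ) ≤
        Real.Gamma (x+γ) * (((1+γ+N):ℝ)^((N:ℝ)-γ) * x ^ ((N:ℝ)-γ)) := by
      calc Real.Gamma x * x ^ (N:ℕ) ≤ Real.Gamma (x+N) := hlow
        _ ≤ Real.Gamma (x+γ) * ((1+γ+N)*x) ^ ((N:ℝ)-γ) := key2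
        _ ≤ _ := mul_le_mul_of_nonneg_left hmono hΓxγ.le
    have h1 : (0:ℝ) < (1+γ+N) := by positivity
    have e1 : ((1+γ+N):ℝ)^(γ-(N:ℝ)) * ((1+γ+N):ℝ)^((N:ℝ)-γ) = 1 := by
      rw [← Real.rpow_add h1]; norm_num
    have e2 : x^(γ-(N:ℝ)) * x^((N:ℝ)-γ) = 1 := by
      rw [← Real.rpow_add hx0]; norm_num
    have e3 : x^(γ-(N:ℝ)) * x^(N:ℕ) = x ^ γ := by
      rw [← Real.rpow_natCast x N, ← Real.rpow_add hx0]; norm_num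
    calc (1+γ+N:ℝ)^(γ-(N:ℝ)) * x ^ γ * Real.Gamma x
        = ((1+γ+N:ℝ)^(γ-(N:ℝ)) * x^(γ-(N:ℝ))) * (Real.Gamma x * x ^ (N:ℕ)) := by
          rw [← e3]; ring
      _ ≤ ((1+γ+N:ℝ)^(γ-(N:ℝ)) * x^(γ-(N:ℝ))) *
          (Real.Gamma (x+γ) * (((1+γ+N):ℝ)^((N:ℝ)-γ) * x ^ ((N:ℝ)-γ))) := by
          refine mul_le_mul_of_nonneg_left hfin (by positivity)
      _ = Real.Gamma (x+γ) * ((((1+γ+N):ℝ)^(γ-(N:ℝ)) * ((1+γ+N):ℝ)^((N:ℝ)-γ)) *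
            (x^(γ-(N:ℝ)) * x^((N:ℝ)-γ))) := by ring
      _ = Real.Gamma (x+γ) := by rw [e1, e2]; ring
  · -- upper bound
    set t : ℝ := γ / N with ht
    have ht0 : 0 ≤ t := by positivity
    have ht1 : t ≤ 1 := by rw [div_le_one hNpos]; exact hγN
    have hcomb : t * (x + N) + (1 - t) * x = x + γ := by
      have htN : t * N = γ := by rw [ht, div_mul_cancel₀ _ hNpos.ne']
      linear_combination htN
    have key := gammaLogConv (x+N) x t (by linarith) hx0 ht0 ht1
    rw [hcomb] at key
    have hub : Real.Gamma (x+N) ≤ Real.Gamma x * ((1+N)*x) ^ N := by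
      rw [gammaProd x hx0 N]
      refine mul_le_mul_of_nonneg_left (prodUB x hx0 N _ ?_) hΓx.le
      nlinarith
    have hBpos : (0:ℝ) < (1+N)*x := by positivity
    calc Real.Gamma (x+γ) ≤ Real.Gamma (x+N) ^ t * Real.Gamma x ^ (1-t) := key
      _ ≤ (Real.Gamma x * ((1+N)*x) ^ N) ^ t * Real.Gamma x ^ (1-t) := by gcongr
      _ = Real.Gamma x * (((1+N)*x) ^ (N:ℕ)) ^ t := combRpow _ _ hΓx (by positivity) t
      _ = Real.Gamma x * ((1+N)*x) ^ γ := by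
          rw [← Real.rpow_natCast ((1+N)*x) N, ← Real.rpow_mul hBpos.le,
            show (N:ℝ)*t = γ by rw [ht, mul_comm, div_mul_cancel₀ _ hNpos.ne']]
      _ = (1+(N:ℝ))^γ * x ^ γ * Real.Gamma x := by
          rw [Real.mul_rpow (by positivity) hx0.le]; ring

theorem wpow (x s α : ℝ) (hx : 0 < x) : x^(s-α) * (x^(α/2) * x^(α/2)) = x^s := by
  rw [← Real.rpow_add hx, ← Real.rpow_add hx, show s - α + (α/2 + α/2) = s by ring]

theorem lamBounds (α : ℝ) (hα : 0 < α) : ∃ c C : ℝ, 0 < c ∧ c ≤ C ∧ ∀ l n : ℕ,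
    c * (((n:ℝ)+1)^(α/2) * ((n:ℝ)+(l:ℝ)+1)^(α/2)) ≤ lamFL α l n ∧
    lamFL α l n ≤ C * (((n:ℝ)+1)^(α/2) * ((n:ℝ)+(l:ℝ)+1)^(α/2)) := by
  obtain ⟨c, C, hc, hC, hb⟩ := grBounds (α/2) (by linarith)
  have hcC : c ≤ C := by
    have h1 := hb 1 le_rfl
    rw [Real.one_rpow, Real.Gamma_one] at h1
    simpa using h1.1.trans h1.2
  have hK : (0:ℝ) < (2:ℝ)^α := Real.rpow_pos_of_pos two_pos α
  refine ⟨(2:ℝ)^α * c^2, (2:ℝ)^α * C^2, by positivity, by nlinarith [mul_le_mul hcC hcC hc.le hC.le, hK.le], fun l n => ?_⟩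
  set x₁ : ℝ := (n:ℝ)+1 with hx1
  set x₂ : ℝ := (n:ℝ)+(l:ℝ)+1 with hx2
  have hx₁ : (1:ℝ) ≤ x₁ := by simp [hx1]
  have hx₂ : (1:ℝ) ≤ x₂ := by
    have : (0:ℝ) ≤ (n:ℝ) + (l:ℝ) := by positivity
    simp [hx2]; linarith
  have hx₁0 : (0:ℝ) < x₁ := lt_of_lt_of_le one_pos hx₁
  have hx₂0 : (0:ℝ) < x₂ := lt_of_lt_of_le one_pos hx₂
  have hΓ1 : 0 < Real.Gamma x₁ := Real.Gamma_pos_of_pos hx₁0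
  have hΓ2 : 0 < Real.Gamma x₂ := Real.Gamma_pos_of_pos hx₂0
  have b1 := hb x₁ hx₁
  have b2 := hb x₂ hx₂
  have hlam : lamFL α l n =
      (2:ℝ)^α * Real.Gamma (x₁ + α/2) * Real.Gamma (x₂ + α/2) /
        (Real.Gamma x₁ * Real.Gamma x₂) := rfl
  rw [hlam]
  have hD : (0:ℝ) < Real.Gamma x₁ * Real.Gamma x₂ := mul_pos hΓ1 hΓ2
  constructor
  · rw [le_div_iff₀ hD]
    calc (2:ℝ)^α * c^2 * (x₁^(α/2) * x₂^(α/2)) * (Real.Gamma x₁ * Real.Gamma x₂)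
        = (2:ℝ)^α * ((c * x₁^(α/2) * Real.Gamma x₁) * (c * x₂^(α/2) * Real.Gamma x₂)) := by
          ring
      _ ≤ (2:ℝ)^α * (Real.Gamma (x₁ + α/2) * Real.Gamma (x₂ + α/2)) := by
          have p1 : 0 ≤ c * x₁^(α/2) * Real.Gamma x₁ := by positivity
          have p2 : 0 ≤ c * x₂^(α/2) * Real.Gamma x₂ := by positivity
          exact mul_le_mul_of_nonneg_left (mul_le_mul b1.1 b2.1 p2 (p1.trans b1.1)) hK.le
      _ = (2:ℝ)^α * Real.Gamma (x₁ + α/2) * Real.Gamma (x₂ + α/2) := by ring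
  · rw [div_le_iff₀ hD]
    calc (2:ℝ)^α * Real.Gamma (x₁ + α/2) * Real.Gamma (x₂ + α/2)
        = (2:ℝ)^α * (Real.Gamma (x₁ + α/2) * Real.Gamma (x₂ + α/2)) := by ring
      _ ≤ (2:ℝ)^α * ((C * x₁^(α/2) * Real.Gamma x₁) * (C * x₂^(α/2) * Real.Gamma x₂)) := by
          exact mul_le_mul_of_nonneg_left
            (mul_le_mul b1.2 b2.2 (Real.Gamma_pos_of_pos (by linarith)).le (by positivity)) hK.le
      _ = (2:ℝ)^α * C^2 * (x₁^(α/2) * x₂^(α/2)) * (Real.Gamma x₁ * Real.Gamma x₂) := by ring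


/-- the coefficient map `a ↦ λ a` of `(−Δ)^{α/2}` is bounded with bounded
inverse between the weighted coefficient spaces: for all `s` and all families `a`,
`Σ (n+1)^{s-α}(n+l+1)^{s-α} λ² a² h² ∼ Σ (n+1)^s (n+l+1)^s a² h²` in `[0,∞]`, with
constants depending only on `α`. -/
theorem stmt9 (α : ℝ) (hα : 0 < α) :
    ∃ C₀ C₁ : ℝ, 0 < C₀ ∧ C₀ ≤ C₁ ∧
      ∀ s : ℝ, ∀ a : IdxI → ℝ,
        ENNReal.ofReal C₀ *
            (∑' i : IdxI, ENNReal.ofReal (wt s i * a i ^ 2 * hh (α / 2) i ^ 2)) ≤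
          (∑' i : IdxI, ENNReal.ofReal
            (wt (s - α) i * lamFL α (lIdx i) (nIdx i) ^ 2 * a i ^ 2 * hh (α / 2) i ^ 2)) ∧
        (∑' i : IdxI, ENNReal.ofReal
            (wt (s - α) i * lamFL α (lIdx i) (nIdx i) ^ 2 * a i ^ 2 * hh (α / 2) i ^ 2)) ≤
          ENNReal.ofReal C₁ *
            (∑' i : IdxI, ENNReal.ofReal (wt s i * a i ^ 2 * hh (α / 2) i ^ 2)) := by
  obtain ⟨c, C, hc, hcC, hpt⟩ := lamBounds α hα
  have hC : 0 < C := lt_of_lt_of_le hc hcC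
  refine ⟨c^2, C^2, by positivity, by nlinarith, fun s a => ?_⟩
  have key : ∀ i : IdxI,
      c^2 * wt s i ≤ wt (s-α) i * lamFL α (lIdx i) (nIdx i) ^ 2 ∧
      wt (s-α) i * lamFL α (lIdx i) (nIdx i) ^ 2 ≤ C^2 * wt s i := by
    intro i
    set n := nIdx i
    set l := lIdx i
    set x₁ : ℝ := (n:ℝ) + 1 with hx1
    set x₂ : ℝ := (n:ℝ) + (l:ℝ) + 1 with hx2
    have hx₁0 : (0:ℝ) < x₁ := by positivity
    have hx₂0 : (0:ℝ) < x₂ := by positivity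
    obtain ⟨h1, h2⟩ := hpt l n
    set P : ℝ := x₁^(α/2) * x₂^(α/2) with hP
    have hP0 : 0 < P := by
      apply mul_pos <;> exact Real.rpow_pos_of_pos (by positivity) _
    have hcP : 0 ≤ c * P := by positivity
    have hlam0 : 0 ≤ lamFL α l n := le_trans hcP h1
    have hsq1 : (c*P)^2 ≤ lamFL α l n ^ 2 := pow_le_pow_left₀ hcP h1 2
    have hsq2 : lamFL α l n ^ 2 ≤ (C*P)^2 := pow_le_pow_left₀ hlam0 h2 2
    have hwpos : 0 < wt (s-α) i := by
      apply mul_pos <;> exact Real.rpow_pos_of_pos (by positivity) _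
    have idc : ∀ d : ℝ, wt (s-α) i * (d*P)^2 = d^2 * wt s i := by
      intro d
      have e1 := wpow x₁ s α hx₁0
      have e2 := wpow x₂ s α hx₂0
      show x₁^(s-α) * x₂^(s-α) * (d*P)^2 = d^2 * (x₁^s * x₂^s)
      calc x₁^(s-α) * x₂^(s-α) * (d*P)^2
          = d^2 * ((x₁^(s-α) * (x₁^(α/2) * x₁^(α/2))) * (x₂^(s-α) * (x₂^(α/2) * x₂^(α/2)))) := by
            rw [hP]; ring
        _ = d^2 * (x₁^s * x₂^s) := by rw [e1, e2]
    constructor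
    · calc c^2 * wt s i = wt (s-α) i * (c*P)^2 := (idc c).symm
        _ ≤ wt (s-α) i * lamFL α l n ^ 2 := mul_le_mul_of_nonneg_left hsq1 hwpos.le
    · calc wt (s-α) i * lamFL α l n ^ 2 ≤ wt (s-α) i * (C*P)^2 :=
          mul_le_mul_of_nonneg_left hsq2 hwpos.le
        _ = C^2 * wt s i := idc C
  constructor
  · rw [← ENNReal.tsum_mul_left]
    refine ENNReal.tsum_le_tsum fun i => ?_
    rw [← ENNReal.ofReal_mul (by positivity)]
    refine ENNReal.ofReal_le_ofReal ?_
    have h := (key i).1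
    nlinarith [sq_nonneg (a i), sq_nonneg (hh (α/2) i), mul_nonneg (sq_nonneg (a i)) (sq_nonneg (hh (α/2) i))]
  · rw [← ENNReal.tsum_mul_left]
    refine ENNReal.tsum_le_tsum fun i => ?_
    rw [← ENNReal.ofReal_mul (by positivity)]
    refine ENNReal.ofReal_le_ofReal ?_
    have h := (key i).2
    nlinarith [sq_nonneg (a i), sq_nonneg (hh (α/2) i), mul_nonneg (sq_nonneg (a i)) (sq_nonneg (hh (α/2) i))]
end
end

section
/- Let γ ≥ 0, let k ≥ 1 be an integer, let l,n ≥ 0 be integers, and let μ ∈ {1,−1} with (l,μ) ≠ (0,−1). For f(x) = 𝒱_{l,μ}(x) P_n^{(γ,l)}(2r²−1), all k-th order partial derivatives ∂^k f/(∂y^j ∂x^{k−j}), j = 0,…,k, vanish identically on the unit disk Ω if and only if 2n + l < k. -/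
open MeasureTheory

noncomputable section

section AuxStmt15

open MvPolynomial

def ev (P : MvPolynomial (Fin 2) ℝ) (p : ℝ × ℝ) : ℝ := eval ![p.1, p.2] P

@[simp] lemma ev_def (P : MvPolynomial (Fin 2) ℝ) (p : ℝ × ℝ) :
    ev P p = eval ![p.1, p.2] P := rfl

def Lx : ℝ × ℝ →L[ℝ] ℝ := ContinuousLinearMap.fst ℝ ℝ ℝ
def Ly : ℝ × ℝ →L[ℝ] ℝ := ContinuousLinearMap.snd ℝ ℝ ℝ

theorem hasFDerivAt_ev (P : MvPolynomial (Fin 2) ℝ) (p : ℝ × ℝ) :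
    HasFDerivAt (ev P) (ev (pderiv 0 P) p • Lx + ev (pderiv 1 P) p • Ly) p := by
  induction P using MvPolynomial.induction_on with
  | C a =>
      have he : ev (C a : MvPolynomial (Fin 2) ℝ) = fun _ => a := funext fun q => by simp
      rw [he]
      simp only [pderiv_C, ev_def, map_zero, zero_smul, add_zero]
      exact hasFDerivAt_const (𝕜 := ℝ) a p
  | add P Q hP hQ =>
      have he : ev (P + Q) = fun y => ev P y + ev Q y := funext fun q => by simp
      rw [he]
      refine (hP.add hQ).congr_fderiv ?_
      simp only [map_add, ev_def, eval_add, add_smul]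
      module
  | mul_X P i hP =>
      rcases (by omega : i = 0 ∨ i = 1) with rfl | rfl
      · have he : ev (P * X 0) = fun y => ev P y * y.1 := funext fun q => by simp
        rw [he]
        have h2 : HasFDerivAt (fun y : ℝ × ℝ => y.1) Lx p := hasFDerivAt_fst
        refine (hP.mul h2).congr_fderiv ?_
        simp only [pderiv_mul, pderiv_X_self, pderiv_X_of_ne (by decide : (0:Fin 2) ≠ 1),
          mul_one, mul_zero, add_zero, map_add, ev_def, eval_add, eval_mul, eval_X,
          Matrix.cons_val_zero, add_smul, smul_add, smul_smul]
        module
      · have he : ev (P * X 1) = fun y => ev P y * y.2 := funext fun q => by simp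
        rw [he]
        have h2 : HasFDerivAt (fun y : ℝ × ℝ => y.2) Ly p := hasFDerivAt_snd
        refine (hP.mul h2).congr_fderiv ?_
        simp only [pderiv_mul, pderiv_X_self, pderiv_X_of_ne (by decide : (1:Fin 2) ≠ 0),
          mul_one, mul_zero, add_zero, map_add, ev_def, eval_add, eval_mul, eval_X,
          Matrix.cons_val_one, Matrix.head_cons, Matrix.cons_val_zero, add_smul, smul_add, smul_smul]
        module

lemma pdx_ev (P : MvPolynomial (Fin 2) ℝ) : pdx (ev P) = ev (pderiv 0 P) := by
  funext p
  have h := (hasFDerivAt_ev P p).fderiv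
  simp only [pdx, h]
  simp [Lx, Ly]

lemma pdy_ev (P : MvPolynomial (Fin 2) ℝ) : pdy (ev P) = ev (pderiv 1 P) := by
  funext p
  have h := (hasFDerivAt_ev P p).fderiv
  simp only [pdy, h]
  simp [Lx, Ly]

lemma pdx_iter_ev (i : ℕ) (P : MvPolynomial (Fin 2) ℝ) :
    pdx^[i] (ev P) = ev ((pderiv 0)^[i] P) := by
  induction i generalizing P with
  | zero => simp
  | succ i ih => rw [Function.iterate_succ_apply, pdx_ev, ih, Function.iterate_succ_apply]

lemma pdy_iter_ev (j : ℕ) (P : MvPolynomial (Fin 2) ℝ) :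
    pdy^[j] (ev P) = ev ((pderiv 1)^[j] P) := by
  induction j generalizing P with
  | zero => simp
  | succ j ih => rw [Function.iterate_succ_apply, pdy_ev, ih, Function.iterate_succ_apply]

lemma pdy_pdx_iter_ev (j i : ℕ) (P : MvPolynomial (Fin 2) ℝ) :
    pdy^[j] (pdx^[i] (ev P)) = ev ((pderiv 1)^[j] ((pderiv 0)^[i] P)) := by
  rw [pdx_iter_ev, pdy_iter_ev]

lemma coeff_pderiv (i : Fin 2) (Q : MvPolynomial (Fin 2) ℝ) (m : Fin 2 →₀ ℕ) :
    coeff m (pderiv i Q) = ((m i : ℝ) + 1) * coeff (m + Finsupp.single i 1) Q := by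
  induction Q using MvPolynomial.induction_on' with
  | monomial s a =>
      rw [pderiv_monomial, coeff_monomial, coeff_monomial]
      by_cases hs : s = m + Finsupp.single i 1
      · have hsi : s i = m i + 1 := by simp [hs]
        have : s - Finsupp.single i 1 = m := by
          rw [hs]; ext j; simp [Finsupp.tsub_apply, Finsupp.add_apply]
        rw [if_pos this, if_pos hs, hsi]
        push_cast; ring
      · rw [if_neg hs]
        by_cases hd : s - Finsupp.single i 1 = m
        · rw [if_pos hd]
          by_cases hzero : s i = 0
          · simp [hzero]
          · exfalso
            apply hs
            have hle : Finsupp.single i 1 ≤ s := by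
              rw [Finsupp.single_le_iff]; omega
            rw [← hd, tsub_add_cancel_of_le hle]
        · rw [if_neg hd, mul_zero]
  | add p q hp hq => simp [map_add, hp, hq]; ring

lemma iter_pderiv_coeff_zero (i : Fin 2) (a : ℕ) (Q : MvPolynomial (Fin 2) ℝ) (m : Fin 2 →₀ ℕ)
    (h : coeff (m + Finsupp.single i a) Q = 0) : coeff m ((pderiv i)^[a] Q) = 0 := by
  induction a generalizing Q m with
  | zero => simpa using h
  | succ a ih =>
      rw [Function.iterate_succ_apply]
      apply ih
      rw [coeff_pderiv]
      have : m + Finsupp.single i a + Finsupp.single i 1 = m + Finsupp.single i (a + 1) := by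
        rw [add_assoc, ← Finsupp.single_add]
      rw [this, h, mul_zero]

lemma iter_pderiv_eq_zero (P : MvPolynomial (Fin 2) ℝ) (i j : ℕ)
    (h : P.totalDegree < i + j) : (pderiv 1)^[j] ((pderiv 0)^[i] P) = 0 := by
  apply MvPolynomial.ext
  intro m
  rw [coeff_zero]
  apply iter_pderiv_coeff_zero
  apply iter_pderiv_coeff_zero
  apply coeff_eq_zero_of_totalDegree_lt
  have hsum : ∀ d : Fin 2 →₀ ℕ, (∑ x ∈ d.support, d x) = d.sum fun _ e => e := fun _ => rfl
  rw [hsum, Finsupp.sum_add_index (by simp) (by simp),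
    Finsupp.sum_add_index (by simp) (by simp),
    Finsupp.sum_single_index rfl, Finsupp.sum_single_index rfl]
  omega

lemma pderiv_comm01 (P : MvPolynomial (Fin 2) ℝ) :
    pderiv 0 (pderiv 1 P) = pderiv 1 (pderiv 0 P) := by
  apply MvPolynomial.ext
  intro m
  rw [coeff_pderiv, coeff_pderiv, coeff_pderiv, coeff_pderiv]
  have h01 : m + Finsupp.single 1 1 + Finsupp.single 0 1
      = m + Finsupp.single 0 1 + Finsupp.single 1 1 := by
    rw [add_assoc, add_assoc, add_comm (Finsupp.single 1 1)]
  rw [h01]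
  simp [Finsupp.add_apply, Finsupp.single_apply]
  ring

lemma pderiv0_iter_pderiv1 (j : ℕ) (P : MvPolynomial (Fin 2) ℝ) :
    pderiv 0 ((pderiv 1)^[j] P) = (pderiv 1)^[j] (pderiv 0 P) := by
  induction j generalizing P with
  | zero => simp
  | succ j ih =>
      rw [Function.iterate_succ_apply, Function.iterate_succ_apply, ih, pderiv_comm01]

open Polynomial in
def subl (v : ℝ × ℝ) (P : MvPolynomial (Fin 2) ℝ) : Polynomial ℝ :=
  MvPolynomial.eval₂ Polynomial.C ![Polynomial.C v.1 * Polynomial.X, Polynomial.C v.2 * Polynomial.X] P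

lemma eval₂_as_subl (v : ℝ × ℝ) (P : MvPolynomial (Fin 2) ℝ) :
    MvPolynomial.eval₂ Polynomial.C
      ![Polynomial.C v.1 * Polynomial.X, Polynomial.C v.2 * Polynomial.X] P = subl v P := rfl

lemma subl_add (v : ℝ × ℝ) (P Q : MvPolynomial (Fin 2) ℝ) :
    subl v (P + Q) = subl v P + subl v Q := by simp [subl]

lemma derivative_subl (v : ℝ × ℝ) (P : MvPolynomial (Fin 2) ℝ) :
    Polynomial.derivative (subl v P) =
      Polynomial.C v.1 * subl v (pderiv 0 P) + Polynomial.C v.2 * subl v (pderiv 1 P) := by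
  induction P using MvPolynomial.induction_on with
  | C a => simp [subl]
  | add P Q hP hQ =>
      simp only [subl_add, map_add, Polynomial.derivative_add, hP, hQ]
      ring
  | mul_X P i hP =>
      rcases (by omega : i = 0 ∨ i = 1) with rfl | rfl
      · simp only [subl, eval₂_mul, eval₂_X, Matrix.cons_val_zero, pderiv_mul, pderiv_X_self,
          pderiv_X_of_ne (by decide : (0:Fin 2) ≠ 1), mul_one, mul_zero, add_zero, map_add,
          eval₂_add, Polynomial.derivative_mul, Polynomial.derivative_C_mul,
          Polynomial.derivative_X, mul_one]
        simp only [eval₂_as_subl, Polynomial.derivative_C, mul_zero, add_zero]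
        rw [hP]
        ring
      · simp only [subl, eval₂_mul, eval₂_X, Matrix.cons_val_one, Matrix.head_cons, Matrix.cons_val_zero, pderiv_mul,
          pderiv_X_self, pderiv_X_of_ne (by decide : (1:Fin 2) ≠ 0), mul_one, mul_zero, add_zero,
          map_add, eval₂_add, Polynomial.derivative_mul, Polynomial.derivative_C_mul,
          Polynomial.derivative_X, mul_one]
        simp only [eval₂_as_subl, Polynomial.derivative_C, mul_zero, add_zero]
        rw [hP]
        ring

lemma my_iterate_derivative_add (m : ℕ) (p q : Polynomial ℝ) :
    Polynomial.derivative^[m] (p + q)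
      = Polynomial.derivative^[m] p + Polynomial.derivative^[m] q := by
  induction m generalizing p q with
  | zero => simp
  | succ m ih => simp [Function.iterate_succ_apply, Polynomial.derivative_add, ih]

lemma iterate_derivative_subl_eq_zero (v : ℝ × ℝ) (m : ℕ) (P : MvPolynomial (Fin 2) ℝ)
    (h : ∀ j ≤ m, (pderiv 1)^[j] ((pderiv 0)^[m - j] P) = 0) :
    Polynomial.derivative^[m] (subl v P) = 0 := by
  induction m generalizing P with
  | zero =>
      have h0 := h 0 le_rfl
      simp only [Function.iterate_zero, id_eq, Nat.zero_sub] at h0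
      rw [h0, subl]
      simp
  | succ m ih =>
      rw [Function.iterate_succ_apply, derivative_subl, my_iterate_derivative_add,
        Polynomial.iterate_derivative_C_mul, Polynomial.iterate_derivative_C_mul]
      have e0 : Polynomial.derivative^[m] (subl v (pderiv 0 P)) = 0 := by
        apply ih
        intro j hj
        rw [← Function.iterate_succ_apply (pderiv 0)]
        rw [Nat.succ_eq_add_one, show m - j + 1 = m + 1 - j by omega]
        exact h j (by omega)
      have e1 : Polynomial.derivative^[m] (subl v (pderiv 1 P)) = 0 := by
        apply ih
        intro j hj
        have : (pderiv 0)^[m - j] (pderiv 1 P) = pderiv 1 ((pderiv 0)^[m-j] P) := by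
          induction (m - j) with
          | zero => simp
          | succ a iha =>
              rw [Function.iterate_succ_apply', Function.iterate_succ_apply', iha, pderiv_comm01]
        rw [this, ← Function.iterate_succ_apply (pderiv 1)]
        have := h (j+1) (by omega)
        rwa [show m + 1 - (j+1) = m - j by omega] at this
      rw [e0, e1, mul_zero, mul_zero, add_zero]

lemma subl_mul (v : ℝ × ℝ) (P Q : MvPolynomial (Fin 2) ℝ) :
    subl v (P * Q) = subl v P * subl v Q := by
  rw [subl, eval₂_mul]; rfl

lemma subl_X0 (v : ℝ × ℝ) : subl v (X 0) = Polynomial.C v.1 * Polynomial.X := by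
  rw [subl, eval₂_X]; rfl

lemma subl_X1 (v : ℝ × ℝ) : subl v (X 1) = Polynomial.C v.2 * Polynomial.X := by
  rw [subl, eval₂_X]; rfl

lemma eval_subl (v : ℝ × ℝ) (P : MvPolynomial (Fin 2) ℝ) (t : ℝ) :
    Polynomial.eval t (subl v P) = ev P (t * v.1, t * v.2) := by
  induction P using MvPolynomial.induction_on with
  | C a => simp [subl]
  | add P Q hP hQ => simp [subl_add, hP, hQ]
  | mul_X P i hP =>
      rcases (by omega : i = 0 ∨ i = 1) with rfl | rfl
      · rw [subl_mul, subl_X0]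
        simp only [Polynomial.eval_mul, Polynomial.eval_C, Polynomial.eval_X, hP, ev_def,
          eval_mul, eval_X, Matrix.cons_val_zero]
        ring
      · rw [subl_mul, subl_X1]
        simp only [Polynomial.eval_mul, Polynomial.eval_C, Polynomial.eval_X, hP, ev_def,
          eval_mul, eval_X, Matrix.cons_val_one, Matrix.head_cons, Matrix.cons_val_zero]
        ring

lemma subl_eq_zero_of_vanish (v : ℝ × ℝ) (P : MvPolynomial (Fin 2) ℝ)
    (hv : v.1 ^ 2 + v.2 ^ 2 = 1) (h : ∀ p ∈ unitDisk, ev P p = 0) : subl v P = 0 := by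
  apply Polynomial.eq_zero_of_infinite_isRoot
  apply Set.Infinite.mono (s := Set.Ioo (-1 : ℝ) 1)
  · intro t ht
    simp only [Set.mem_Ioo] at ht
    have hmem : (t * v.1, t * v.2) ∈ unitDisk := by
      simp only [unitDisk, Set.mem_setOf_eq]
      have : (t * v.1) ^ 2 + (t * v.2) ^ 2 = t ^ 2 * (v.1 ^ 2 + v.2 ^ 2) := by ring
      rw [this, hv, mul_one]
      nlinarith [ht.1, ht.2]
    simp only [Set.mem_setOf_eq, Polynomial.IsRoot, eval_subl]
    exact h _ hmem
  · exact Set.Ioo_infinite (by norm_num)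

lemma eq_zero_of_vanish_on_disk (P : MvPolynomial (Fin 2) ℝ)
    (h : ∀ p ∈ unitDisk, ev P p = 0) : P = 0 := by
  have hall : ∀ p : ℝ × ℝ, ev P p = 0 := by
    intro p
    rcases eq_or_ne (p.1 ^ 2 + p.2 ^ 2) 0 with h0 | hne
    · exact h p (by simp [unitDisk, h0])
    · set e := Real.sqrt (p.1 ^ 2 + p.2 ^ 2) with he
      have hpos : 0 < e := Real.sqrt_pos.mpr (lt_of_le_of_ne (by positivity) (Ne.symm hne))
      have he2 : e ^ 2 = p.1 ^ 2 + p.2 ^ 2 := Real.sq_sqrt (by positivity)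
      set v : ℝ × ℝ := (p.1 / e, p.2 / e) with hv
      have hv1 : v.1 ^ 2 + v.2 ^ 2 = 1 := by
        show (p.1 / e) ^ 2 + (p.2 / e) ^ 2 = 1
        rw [div_pow, div_pow, ← add_div, ← he2]
        exact div_self (pow_pos hpos 2).ne'
      have hz := subl_eq_zero_of_vanish v P hv1 h
      have := eval_subl v P e
      rw [hz] at this
      simp only [Polynomial.eval_zero] at this
      have hp : (e * v.1, e * v.2) = p := by
        simp only [hv]
        field_simp
      rw [hp] at this
      exact this.symm
  have : ∀ x : Fin 2 → ℝ, eval x P = eval x (0 : MvPolynomial (Fin 2) ℝ) := by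
    intro x
    have hx : ![(x 0, x 1).1, (x 0, x 1).2] = x := by
      funext i
      fin_cases i <;> simp
    have := hall (x 0, x 1)
    rw [ev_def, hx] at this
    simp [this]
  exact MvPolynomial.funext this

def jacS (γ : ℝ) (l n : ℕ) : ℝ :=
  (-1 : ℝ) ^ n * (Real.Gamma ((n : ℝ) + 1 + (l : ℝ)) /
    ((n.factorial : ℝ) * Real.Gamma ((n : ℝ) + 1 + γ + (l : ℝ))))

def jacC (γ : ℝ) (l n : ℕ) (j : ℕ) : ℝ :=
  (-1 : ℝ) ^ j * (2 : ℝ) ^ (-(j : ℤ)) * (n.choose j : ℝ) *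
    (Real.Gamma ((n : ℝ) + (j : ℝ) + 1 + γ + (l : ℝ)) / Real.Gamma ((j : ℝ) + 1 + (l : ℝ)))

def QcP (γ : ℝ) (l n : ℕ) : MvPolynomial (Fin 2) ℝ :=
  C (jacS γ l n) * ∑ j ∈ Finset.range (n + 1),
    C (jacC γ l n j) * (C 2 * (X 0 ^ 2 + X 1 ^ 2)) ^ j

lemma ev_QcP (γ : ℝ) (l n : ℕ) (p : ℝ × ℝ) :
    ev (QcP γ l n) p = jacobiP γ (l : ℝ) (n : ℤ) (2 * (p.1 ^ 2 + p.2 ^ 2) - 1) := by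
  rw [jacobiP, if_pos (by positivity : (0:ℤ) ≤ (n:ℤ))]
  simp only [Int.toNat_natCast]
  rw [QcP, ev_def, eval_mul, eval_C, map_sum]
  rw [jacS]
  congr 1
  apply Finset.sum_congr rfl
  intro j hj
  rw [eval_mul, eval_C, map_pow, eval_mul, eval_C, map_add, map_pow, map_pow, eval_X, eval_X]
  rw [jacC]
  simp only [Matrix.cons_val_zero, Matrix.cons_val_one, Matrix.head_cons]
  have : (1 : ℝ) + (2 * (p.1 ^ 2 + p.2 ^ 2) - 1) = 2 * (p.1 ^ 2 + p.2 ^ 2) := by ring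
  rw [this]

def AP (l : ℕ) (μ : ℤ) : MvPolynomial (Fin 2) ℝ :=
  if l = 0 then C (1 / 2) else
  ∑ k ∈ Finset.range (l + 1),
    C ((l.choose k : ℝ) *
        (if μ = 1 then (Complex.I ^ (l - k)).re else (Complex.I ^ (l - k)).im)) *
      X 0 ^ k * X 1 ^ (l - k)

lemma ev_AP (l : ℕ) (μ : ℤ) (hμ : μ = 1 ∨ μ = -1) (hlμ : ¬(l = 0 ∧ μ = -1)) (p : ℝ × ℝ) :
    ev (AP l μ) p = solidH (l : ℤ) μ p := by
  by_cases hl : l = 0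
  · subst hl
    have hμ1 : μ = 1 := hμ.resolve_right fun h => hlμ ⟨rfl, h⟩
    subst hμ1
    simp [AP, solidH]
  · have hl' : ((l : ℤ) ≠ 0) := by exact_mod_cast hl
    have hlpos : (0 : ℤ) < (l : ℤ) := by positivity
    rw [solidH, if_neg hl', if_pos hlpos]
    have htn : ((l : ℤ)).toNat = l := Int.toNat_natCast l
    rw [htn]
    have hexp : ((p.1 : ℂ) + (p.2 : ℂ) * Complex.I) ^ l
        = ∑ k ∈ Finset.range (l + 1),
            ((p.1 ^ k * p.2 ^ (l - k) * (l.choose k : ℝ) : ℝ) : ℂ) * Complex.I ^ (l - k) := by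
      rw [add_pow]
      apply Finset.sum_congr rfl
      intro k hk
      push_cast
      ring
    have hev : ev (AP l μ) p = ∑ k ∈ Finset.range (l + 1),
        (l.choose k : ℝ) *
          (if μ = 1 then (Complex.I ^ (l - k)).re else (Complex.I ^ (l - k)).im) *
          p.1 ^ k * p.2 ^ (l - k) := by
      rw [AP, if_neg hl, ev_def, map_sum]
      apply Finset.sum_congr rfl
      intro k hk
      simp [eval_mul, eval_C, eval_X]
    rcases hμ with hμ1 | hμ1 <;> subst hμ1
    · rw [if_pos rfl, hev, hexp, Complex.re_sum]
      apply Finset.sum_congr rfl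
      intro k hk
      rw [Complex.re_ofReal_mul]
      simp only [eq_self_iff_true, if_true]
      ring
    · rw [if_neg (by decide : (-1 : ℤ) ≠ 1), if_pos rfl, hev, hexp, Complex.im_sum]
      apply Finset.sum_congr rfl
      intro k hk
      rw [Complex.im_ofReal_mul]
      simp only [if_neg (by decide : (-1 : ℤ) ≠ 1)]
      ring

def PP (γ : ℝ) (l n : ℕ) (μ : ℤ) : MvPolynomial (Fin 2) ℝ := AP l μ * QcP γ l n

lemma ev_PP (γ : ℝ) (l n : ℕ) (μ : ℤ) (hμ : μ = 1 ∨ μ = -1) (hlμ : ¬(l = 0 ∧ μ = -1))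
    (p : ℝ × ℝ) : ev (PP γ l n μ) p
      = solidH (l : ℤ) μ p * jacobiP γ (l : ℝ) (n : ℤ) (2 * (p.1 ^ 2 + p.2 ^ 2) - 1) := by
  rw [PP, ev_def, eval_mul, ← ev_def, ← ev_def, ev_AP l μ hμ hlμ, ev_QcP]

lemma totalDegree_C_mul_XX (a : ℝ) (i j : ℕ) :
    ((C a * X 0 ^ i * X 1 ^ j) : MvPolynomial (Fin 2) ℝ).totalDegree ≤ i + j := by
  apply le_trans (totalDegree_mul _ _)
  have h1 : ((C a * X 0 ^ i) : MvPolynomial (Fin 2) ℝ).totalDegree ≤ i := by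
    apply le_trans (totalDegree_mul _ _)
    rw [totalDegree_C, zero_add]
    exact le_trans (totalDegree_pow _ _) (by simp [totalDegree_X])
  have h2 : ((X 1 ^ j) : MvPolynomial (Fin 2) ℝ).totalDegree ≤ j :=
    le_trans (totalDegree_pow _ _) (by simp [totalDegree_X])
  omega

lemma totalDegree_AP (l : ℕ) (μ : ℤ) : (AP l μ).totalDegree ≤ l := by
  rw [AP]
  by_cases hl : l = 0
  · rw [if_pos hl]
    simp [totalDegree_C]
  · rw [if_neg hl]
    apply le_trans (totalDegree_finset_sum _ _)
    apply Finset.sup_le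
    intro k hk
    have hk' : k ≤ l := by
      have := Finset.mem_range.mp hk; omega
    exact le_trans (totalDegree_C_mul_XX _ k (l - k)) (by omega)

lemma totalDegree_QcP (γ : ℝ) (l n : ℕ) : (QcP γ l n).totalDegree ≤ 2 * n := by
  rw [QcP]
  apply le_trans (totalDegree_mul _ _)
  rw [totalDegree_C, zero_add]
  apply le_trans (totalDegree_finset_sum _ _)
  apply Finset.sup_le
  intro j hj
  have hj' : j ≤ n := by have := Finset.mem_range.mp hj; omega
  apply le_trans (totalDegree_mul _ _)
  rw [totalDegree_C, zero_add]
  apply le_trans (totalDegree_pow _ _)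
  have hbase : ((C 2 * (X 0 ^ 2 + X 1 ^ 2)) : MvPolynomial (Fin 2) ℝ).totalDegree ≤ 2 := by
    apply le_trans (totalDegree_mul _ _)
    rw [totalDegree_C, zero_add]
    apply le_trans (totalDegree_add _ _)
    apply max_le
    · exact le_trans (totalDegree_pow _ _) (by simp [totalDegree_X])
    · exact le_trans (totalDegree_pow _ _) (by simp [totalDegree_X])
  calc j * (C 2 * (X 0 ^ 2 + X 1 ^ 2) : MvPolynomial (Fin 2) ℝ).totalDegree
      ≤ j * 2 := Nat.mul_le_mul_left j hbase
    _ ≤ 2 * n := by omega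

lemma totalDegree_PP (γ : ℝ) (l n : ℕ) (μ : ℤ) : (PP γ l n μ).totalDegree ≤ 2 * n + l := by
  apply le_trans (totalDegree_mul _ _)
  have := totalDegree_AP l μ
  have := totalDegree_QcP γ l n
  omega

def QT (γ : ℝ) (l n : ℕ) (a : ℝ) : Polynomial ℝ :=
  Polynomial.C (a * jacS γ l n) * (Polynomial.X ^ l *
    ∑ j ∈ Finset.range (n + 1), Polynomial.C (jacC γ l n j * 2 ^ j) * Polynomial.X ^ (2 * j))

lemma eval_QT (γ : ℝ) (l n : ℕ) (a t : ℝ) :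
    Polynomial.eval t (QT γ l n a) = a * t ^ l * jacobiP γ (l : ℝ) (n : ℤ) (2 * t ^ 2 - 1) := by
  rw [jacobiP, if_pos (by positivity : (0:ℤ) ≤ (n:ℤ))]
  simp only [Int.toNat_natCast]
  have h1 : ∑ j ∈ Finset.range (n + 1),
      (-1 : ℝ) ^ j * (2 : ℝ) ^ (-(j : ℤ)) * (n.choose j : ℝ) *
        (Real.Gamma ((n : ℝ) + (j : ℝ) + 1 + γ + (l : ℝ)) / Real.Gamma ((j : ℝ) + 1 + (l : ℝ))) *
        (1 + (2 * t ^ 2 - 1)) ^ j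
      = ∑ j ∈ Finset.range (n + 1), jacC γ l n j * 2 ^ j * t ^ (2 * j) := by
    apply Finset.sum_congr rfl
    intro j hj
    rw [jacC, show (1 : ℝ) + (2 * t ^ 2 - 1) = 2 * t ^ 2 by ring, mul_pow, pow_mul]
    ring
  rw [h1, QT]
  simp only [Polynomial.eval_mul, Polynomial.eval_C, Polynomial.eval_pow, Polynomial.eval_X,
    Polynomial.eval_finset_sum, jacS]
  ring

lemma jacS_ne_zero (γ : ℝ) (hγ : 0 ≤ γ) (l n : ℕ) : jacS γ l n ≠ 0 := by
  rw [jacS]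
  apply mul_ne_zero (pow_ne_zero _ (by norm_num))
  apply ne_of_gt
  apply div_pos
  · exact Real.Gamma_pos_of_pos (by positivity)
  · apply mul_pos (by exact_mod_cast n.factorial_pos)
    exact Real.Gamma_pos_of_pos (by positivity)

lemma jacC_ne_zero (γ : ℝ) (hγ : 0 ≤ γ) (l n : ℕ) : jacC γ l n n ≠ 0 := by
  rw [jacC]
  apply mul_ne_zero
  apply mul_ne_zero
  apply mul_ne_zero (pow_ne_zero _ (by norm_num))
  · exact zpow_ne_zero _ (by norm_num)
  · simp [Nat.choose_self]
  · apply ne_of_gt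
    apply div_pos
    · exact Real.Gamma_pos_of_pos (by positivity)
    · exact Real.Gamma_pos_of_pos (by positivity)

lemma coeff_QT (γ : ℝ) (l n : ℕ) (a : ℝ) :
    (QT γ l n a).coeff (2 * n + l) = a * jacS γ l n * (jacC γ l n n * 2 ^ n) := by
  rw [QT, Polynomial.coeff_C_mul, show (2 * n + l) = 2 * n + l from rfl]
  rw [Polynomial.coeff_X_pow_mul _ l (2 * n), Polynomial.finset_sum_coeff]
  rw [Finset.sum_eq_single n]
  · rw [Polynomial.coeff_C_mul, Polynomial.coeff_X_pow, if_pos rfl, mul_one]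
  · intro j hj hne
    rw [Polynomial.coeff_C_mul, Polynomial.coeff_X_pow, if_neg (by omega), mul_zero]
  · intro h
    exact absurd (Finset.self_mem_range_succ n) h

lemma exists_line (l : ℕ) (μ : ℤ) (hμ : μ = 1 ∨ μ = -1) (hlμ : ¬(l = 0 ∧ μ = -1)) :
    ∃ (v : ℝ × ℝ) (a : ℝ), v.1 ^ 2 + v.2 ^ 2 = 1 ∧ a ≠ 0 ∧
      ∀ t : ℝ, solidH (l : ℤ) μ (t * v.1, t * v.2) = a * t ^ l := by
  by_cases hl : l = 0
  · subst hl
    have hμ1 : μ = 1 := hμ.resolve_right fun h => hlμ ⟨rfl, h⟩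
    subst hμ1
    exact ⟨(1, 0), 1/2, by norm_num, by norm_num, fun t => by simp [solidH]⟩
  · have hl' : ((l : ℤ)) ≠ 0 := by exact_mod_cast hl
    have hlpos : (0 : ℤ) < (l : ℤ) := by positivity
    have htn : ((l : ℤ)).toNat = l := Int.toNat_natCast l
    rcases hμ with hμ1 | hμ1 <;> subst hμ1
    · refine ⟨(1, 0), 1, by norm_num, by norm_num, fun t => ?_⟩
      rw [solidH, if_neg hl', if_pos hlpos, if_pos rfl, htn]
      simp only [mul_one, mul_zero]
      rw [show ((t : ℂ) + (0:ℝ) * Complex.I) = (t : ℂ) by simp]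
      rw [← Complex.ofReal_pow, Complex.ofReal_re, one_mul]
    · set θ := Real.pi / (2 * l) with hθ
      refine ⟨(Real.cos θ, Real.sin θ), 1, by rw [← Real.sin_sq_add_cos_sq θ]; ring,
        by norm_num, fun t => ?_⟩
      rw [solidH, if_neg hl', if_pos hlpos, if_neg (by decide : (-1:ℤ) ≠ 1), if_pos rfl, htn]
      have hz : ((t * Real.cos θ : ℝ) : ℂ) + ((t * Real.sin θ : ℝ) : ℂ) * Complex.I
          = (t : ℂ) * (Complex.cos (θ : ℂ) + Complex.sin (θ : ℂ) * Complex.I) := by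
        push_cast [Complex.ofReal_cos, Complex.ofReal_sin]
        ring
      rw [hz, mul_pow, Complex.cos_add_sin_mul_I_pow, ← Complex.ofReal_pow]
      have hlθ : (l : ℂ) * (θ : ℂ) = ((Real.pi / 2 : ℝ) : ℂ) := by
        push_cast
        rw [hθ]
        have : (l : ℂ) ≠ 0 := by exact_mod_cast hl'
        have h2 : (l : ℂ) * (l : ℂ)⁻¹ = 1 := mul_inv_cancel₀ this
        push_cast
        linear_combination (↑Real.pi / 2 : ℂ) * h2
      rw [hlθ, Complex.im_ofReal_mul]
      rw [← Complex.ofReal_cos, ← Complex.ofReal_sin]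
      simp [Real.sin_pi_div_two]

end AuxStmt15

/-- all `k`-th order partial derivatives of
`f = 𝒱_{l,μ} P_n^{(γ,l)}(2r²-1)` vanish identically on the unit disk iff `2n + l < k`. -/
theorem stmt15 (γ : ℝ) (hγ : 0 ≤ γ) (k : ℕ) (hk : 1 ≤ k) (l n : ℕ) (μ : ℤ)
    (hμ : μ = 1 ∨ μ = -1) (hlμ : ¬(l = 0 ∧ μ = -1)) :
    (∀ j : ℕ, j ≤ k → ∀ p ∈ unitDisk,
        (pdy^[j] (pdx^[k - j] fun q => solidH (l : ℤ) μ q *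
          jacobiP γ (l : ℝ) (n : ℤ) (2 * (q.1 ^ 2 + q.2 ^ 2) - 1))) p = 0) ↔
      2 * n + l < k := by
  have hfun : (fun q : ℝ × ℝ => solidH (l : ℤ) μ q *
      jacobiP γ (l : ℝ) (n : ℤ) (2 * (q.1 ^ 2 + q.2 ^ 2) - 1)) = ev (PP γ l n μ) :=
    funext fun q => (ev_PP γ l n μ hμ hlμ q).symm
  rw [hfun]
  constructor
  · intro H
    by_contra hlt
    push_neg at hlt
    obtain ⟨v, a, hv1, ha, hsol⟩ := exists_line l μ hμ hlμ
    have hR : ∀ j ≤ k, (MvPolynomial.pderiv 1)^[j] ((MvPolynomial.pderiv 0)^[k - j] (PP γ l n μ)) = 0 := by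
      intro j hj
      apply eq_zero_of_vanish_on_disk
      intro p hp
      have hH := H j hj p hp
      rwa [pdy_pdx_iter_ev] at hH
    have hz := iterate_derivative_subl_eq_zero v k _ hR
    have hQT : subl v (PP γ l n μ) = QT γ l n a := by
      apply Polynomial.funext
      intro t
      rw [eval_subl, ev_PP γ l n μ hμ hlμ, eval_QT]
      have harg : (t * v.1) ^ 2 + (t * v.2) ^ 2 = t ^ 2 := by
        have h2 : (t * v.1) ^ 2 + (t * v.2) ^ 2 = t ^ 2 * (v.1 ^ 2 + v.2 ^ 2) := by ring
        rw [h2, hv1, mul_one]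
      rw [harg, hsol]
    rw [hQT] at hz
    have hco := congrArg (fun q : Polynomial ℝ => q.coeff (2 * n + l - k)) hz
    simp only [Polynomial.coeff_iterate_derivative, Polynomial.coeff_zero] at hco
    rw [show 2 * n + l - k + k = 2 * n + l by omega, coeff_QT, nsmul_eq_mul] at hco
    have hdesc : ((2 * n + l).descFactorial k : ℝ) ≠ 0 := by
      rw [Ne, Nat.cast_eq_zero, Nat.descFactorial_eq_zero_iff_lt]
      omega
    have hne : a * jacS γ l n * (jacC γ l n n * 2 ^ n) ≠ 0 :=
      mul_ne_zero (mul_ne_zero ha (jacS_ne_zero γ hγ l n))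
        (mul_ne_zero (jacC_ne_zero γ hγ l n) (by positivity))
    rcases mul_eq_zero.mp hco with h | h
    exacts [hdesc h, hne h]
  · intro hlt j hj p hp
    rw [pdy_pdx_iter_ev, iter_pderiv_eq_zero _ (k - j) j
      (by have := totalDegree_PP γ l n μ; omega)]
    simp
end
end

section
/- Let γ ≥ 0, let l, n ≥ 0 be integers, and let μ ∈ {1,−1} with (l,μ) ≠ (0,−1). Then ∫_Ω (1−r²)^γ (𝒱_{l,μ}(x) P_n^{(γ,l)}(2r²−1))² dx = [C_{l,μ} / (2(2n+γ+l+1))] · Γ(n+γ+1) Γ(n+l+1) / (Γ(n+1) Γ(n+γ+l+1)), where C_{0,1} := π/2 and C_{l,μ} := π for l ≥ 1. In particular this quantity is strictly positive and is the same for μ = 1 and μ = −1 when l ≥ 1. -/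
open MeasureTheory

noncomputable section

section Aux
open Finset Polynomial Real


lemma gamma_add_nat {x : ℝ} (hx : 0 < x) (m : ℕ) :
    Real.Gamma (x + m) = Real.Gamma x * ∏ i ∈ range m, (x + i) := by
  induction m with
  | zero => simp
  | succ m ih =>
    have hxm : x + m ≠ 0 := by positivity
    have h2 : x + (m + 1 : ℕ) = (x + m) + 1 := by push_cast; ring
    rw [h2, Real.Gamma_add_one hxm, ih, prod_range_succ]
    ring

lemma sum_alt_inv (n : ℕ) : ∀ x : ℝ, 0 < x →
    ∑ j ∈ range (n + 1), (-1 : ℝ) ^ j * (n.choose j : ℝ) * (1 / (x + j))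
      = (n.factorial : ℝ) / ∏ i ∈ range (n + 1), (x + i) := by
  induction n with
  | zero => intro x hx; simp
  | succ n ih =>
    intro x hx
    set g : ℕ → ℝ := fun j => (-1 : ℝ) ^ j * (n.choose j : ℝ) * (1 / (x + j)) with hg
    have key : ∑ j ∈ range (n + 2), (-1 : ℝ) ^ j * ((n+1).choose j : ℝ) * (1 / (x + j))
        = (∑ j ∈ range (n + 1), g j)
          - ∑ j ∈ range (n + 1), (-1 : ℝ) ^ j * (n.choose j : ℝ) * (1 / ((x+1) + j)) := by
      rw [sum_range_succ' (fun j => (-1 : ℝ) ^ j * ((n+1).choose j : ℝ) * (1 / (x + j))) (n+1)]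
      have e1 : ∀ j ∈ range (n+1),
          (-1 : ℝ) ^ (j+1) * ((n+1).choose (j+1) : ℝ) * (1 / (x + (j+1 : ℕ)))
          = (-1:ℝ)^(j+1) * (n.choose (j+1) : ℝ) * (1 / (x + (j+1:ℕ)))
            - (-1:ℝ)^j * (n.choose j : ℝ) * (1 / ((x+1) + j)) := by
        intro j _
        rw [Nat.choose_succ_succ']
        have h3 : x + ((j+1 : ℕ) : ℝ) = (x+1) + j := by push_cast; ring
        rw [h3]
        push_cast; ring
      rw [sum_congr rfl e1, sum_sub_distrib]
      have e2 : ∑ j ∈ range (n+1), (-1:ℝ)^(j+1) * (n.choose (j+1) : ℝ) * (1 / (x + ((j+1:ℕ):ℝ)))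
            + (-1:ℝ)^0 * ((n+1).choose 0 : ℝ) * (1 / (x + ((0:ℕ):ℝ)))
          = ∑ j ∈ range (n + 2), g j := by
        rw [sum_range_succ' g (n+1)]
        simp [hg]
      have e3 : ∑ j ∈ range (n + 2), g j = ∑ j ∈ range (n + 1), g j := by
        rw [sum_range_succ]
        simp [hg]
      rw [sub_add_eq_add_sub, e2, e3]
    rw [key, ih x hx, ih (x+1) (by linarith)]
    set A : ℝ := ∏ i ∈ range (n + 1), (x + i) with hA
    set B : ℝ := ∏ i ∈ range (n + 1), ((x+1) + i) with hB
    have hApos : 0 < A := prod_pos fun i _ => by positivity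
    have hBpos : 0 < B := prod_pos fun i _ => by positivity
    have hcpos : (0:ℝ) < x + ((n+1 : ℕ) : ℝ) := by positivity
    have hP : ∏ i ∈ range (n + 2), (x + i) = A * (x + ((n+1:ℕ):ℝ)) := prod_range_succ _ _
    have hP2 : ∏ i ∈ range (n + 2), (x + i) = x * B := by
      rw [prod_range_succ' (fun i : ℕ => x + (i:ℝ)) (n+1)]
      have e : (∏ i ∈ range (n+1), (x + (((i+1):ℕ):ℝ))) = B :=
        prod_congr rfl fun i _ => by push_cast; ring
      rw [e]
      push_cast; ring
    have hABc : A * (x + ((n+1:ℕ):ℝ)) = B * x := by rw [← hP, hP2]; ring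
    rw [hP]
    have h1 : (n.factorial : ℝ)/A
        = (n.factorial * (x + ((n+1:ℕ):ℝ)))/(A * (x + ((n+1:ℕ):ℝ))) :=
      (mul_div_mul_right _ _ hcpos.ne').symm
    have h2 : (n.factorial : ℝ)/B = (n.factorial * x)/(A * (x + ((n+1:ℕ):ℝ))) := by
      rw [hABc]
      exact (mul_div_mul_right _ _ hx.ne').symm
    rw [h1, h2, div_sub_div_same]
    congr 1
    push_cast [Nat.factorial_succ]
    ring

lemma sum_alt_poly (n : ℕ) : ∀ p : Polynomial ℝ, p.natDegree < n →
    ∑ j ∈ range (n + 1), (-1 : ℝ) ^ j * (n.choose j : ℝ) * p.eval (j : ℝ) = 0 := by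
  induction n with
  | zero => intro p hp; omega
  | succ n ih =>
    intro p hp
    set q : Polynomial ℝ := p - p.comp (X + C 1) with hq
    have key : ∑ j ∈ range (n + 2), (-1 : ℝ) ^ j * ((n+1).choose j : ℝ) * p.eval (j:ℝ)
        = ∑ j ∈ range (n + 1), (-1 : ℝ) ^ j * (n.choose j : ℝ) * q.eval (j:ℝ) := by
      have hqe : ∀ j : ℕ, q.eval (j:ℝ) = p.eval (j:ℝ) - p.eval ((j:ℝ)+1) := by
        intro j; simp [hq, eval_comp]
      rw [sum_range_succ' (fun j => (-1 : ℝ) ^ j * ((n+1).choose j : ℝ) * p.eval (j:ℝ)) (n+1)]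
      have e1 : ∀ j ∈ range (n+1),
          (-1 : ℝ) ^ (j+1) * ((n+1).choose (j+1) : ℝ) * p.eval ((j+1 : ℕ):ℝ)
          = (-1:ℝ)^(j+1) * (n.choose (j+1) : ℝ) * p.eval ((j+1:ℕ):ℝ)
            - (-1:ℝ)^j * (n.choose j : ℝ) * p.eval ((j:ℝ)+1) := by
        intro j _
        rw [Nat.choose_succ_succ']
        have h3 : (((j+1:ℕ)):ℝ) = (j:ℝ)+1 := by push_cast; ring
        rw [h3]
        push_cast; ring
      rw [sum_congr rfl e1, sum_sub_distrib]
      have e2 : ∑ j ∈ range (n+1), (-1:ℝ)^(j+1) * (n.choose (j+1) : ℝ) * p.eval (((j+1:ℕ)):ℝ)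
            + (-1:ℝ)^0 * ((n+1).choose 0 : ℝ) * p.eval (((0:ℕ)):ℝ)
          = ∑ j ∈ range (n + 2), (-1:ℝ)^j * (n.choose j : ℝ) * p.eval ((j:ℕ):ℝ) := by
        rw [sum_range_succ' (fun j => (-1:ℝ)^j * (n.choose j : ℝ) * p.eval ((j:ℕ):ℝ)) (n+1)]
        norm_num
      have e3 : ∑ j ∈ range (n + 2), (-1:ℝ)^j * (n.choose j : ℝ) * p.eval ((j:ℕ):ℝ)
          = ∑ j ∈ range (n + 1), (-1:ℝ)^j * (n.choose j : ℝ) * p.eval ((j:ℕ):ℝ) := by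
        rw [sum_range_succ]; simp
      rw [sub_add_eq_add_sub, e2, e3, ← sum_sub_distrib]
      exact sum_congr rfl fun j _ => by rw [hqe]; ring
    rw [key]
    by_cases hq0 : q = 0
    · simp [hq0]
    · apply ih
      -- natDegree q < n
      have hpd : p.natDegree ≠ 0 := by
        intro h0
        obtain ⟨c, rfl⟩ := Polynomial.natDegree_eq_zero.mp h0
        simp [hq] at hq0
      have hp0 : p ≠ 0 := fun h => hpd (by simp [h])
      have hcomp_nd : (p.comp (X + C 1)).natDegree = p.natDegree := by
        rw [natDegree_comp, natDegree_X_add_C, mul_one]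
      have hcomp0 : p.comp (X + C 1) ≠ 0 := by
        intro h
        have := hcomp_nd
        rw [h] at this
        simp at this
        exact hpd this.symm
      have hdeg : q.degree < p.degree := by
        apply degree_sub_lt _ hp0
        · rw [leadingCoeff_comp (by rw [natDegree_X_add_C]; norm_num)]
          rw [leadingCoeff_X_add_C, one_pow, mul_one]
        · rw [degree_eq_natDegree hp0, degree_eq_natDegree hcomp0, hcomp_nd]
      have : q.natDegree < p.natDegree := by
        rwa [← Polynomial.natDegree_lt_natDegree_iff hq0] at hdeg
      omega

lemma betaNat {a : ℝ} (ha : 0 ≤ a) (m : ℕ) :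
    ∫ u in (0:ℝ)..1, (1 - u) ^ a * (u : ℝ) ^ m
      = Real.Gamma (a+1) * (m.factorial : ℝ) / Real.Gamma (a + m + 2) := by
  have h1 : (0:ℝ) < (m:ℝ) + 1 := by positivity
  have h2 : (0:ℝ) < a + 1 := by linarith
  have hB := Complex.Gamma_mul_Gamma_eq_betaIntegral
    (s := ((m:ℝ)+1 : ℝ)) (t := ((a+1 : ℝ) : ℂ))
    (by simpa using h1) (by simpa using h2)
  -- betaIntegral = ofReal of our integral
  have hint : Complex.betaIntegral ((m:ℝ)+1 : ℝ) ((a+1 : ℝ) : ℂ)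
      = ((∫ u in (0:ℝ)..1, (1 - u) ^ a * (u:ℝ) ^ m : ℝ) : ℂ) := by
    rw [Complex.betaIntegral]
    rw [← intervalIntegral.integral_ofReal]
    apply intervalIntegral.integral_congr
    intro x hx
    rw [Set.uIcc_of_le (by norm_num : (0:ℝ) ≤ 1)] at hx
    obtain ⟨hx0, hx1⟩ := hx
    have e1 : (((m:ℝ)+1 : ℝ) : ℂ) - 1 = (m : ℂ) := by push_cast; ring
    have e2 : ((a+1 : ℝ) : ℂ) - 1 = (a : ℂ) := by push_cast; ring
    dsimp only
    rw [e1, e2]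
    rw [Complex.cpow_natCast]
    have e3 : (1 - (x:ℂ)) = ((1 - x : ℝ) : ℂ) := by push_cast; ring
    rw [e3, ← Complex.ofReal_cpow (by linarith : (0:ℝ) ≤ 1 - x)]
    push_cast
    ring
  rw [hint] at hB
  have hGne : Real.Gamma (a + m + 2) ≠ 0 := (Real.Gamma_pos_of_pos (by positivity)).ne'
  have hsum : (((m:ℝ)+1 : ℝ) : ℂ) + ((a+1:ℝ) : ℂ) = ((a + m + 2 : ℝ) : ℂ) := by
    push_cast; ring
  rw [hsum] at hB
  have hBre := congrArg Complex.re hB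
  rw [Complex.Gamma_ofReal, Complex.Gamma_ofReal, Complex.Gamma_ofReal] at hBre
  simp only [← Complex.ofReal_mul, Complex.ofReal_re] at hBre
  have : Real.Gamma ((m:ℝ)+1) = (m.factorial : ℝ) := Real.Gamma_nat_eq_factorial m
  rw [this] at hBre
  field_simp
  linear_combination -hBre

lemma gamma_ratio {x : ℝ} (hx : 0 < x) (m : ℕ) :
    Real.Gamma (x + m) / Real.Gamma x = ∏ i ∈ range m, (x + i) := by
  rw [gamma_add_nat hx m, mul_comm, mul_div_assoc,
    div_self (Real.Gamma_pos_of_pos hx).ne', mul_one]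

lemma Sj_zero (a : ℝ) (ha : 0 ≤ a) (b n j : ℕ) (hj : j < n) :
    ∑ i ∈ range (n+1), (-1:ℝ)^i * (n.choose i : ℝ) *
        (Real.Gamma ((n:ℝ)+(i:ℝ)+1+a+b) / Real.Gamma ((i:ℝ)+1+b)) *
        (((b+j+i).factorial : ℝ) / Real.Gamma (a+((b+j+i:ℕ):ℝ)+2)) = 0 := by
  set p : Polynomial ℝ :=
    (∏ m ∈ range j, (X + C ((b:ℝ)+1+(m:ℝ)))) *
      ∏ m ∈ range (n-1-j), (X + C (a+(b:ℝ)+(j:ℝ)+2+(m:ℝ))) with hp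
  have hdeg : p.natDegree < n := by
    rw [hp, natDegree_mul, natDegree_prod, natDegree_prod]
    · simp only [natDegree_X_add_C]
      simp only [sum_const, card_range, smul_eq_mul, mul_one]
      omega
    · intro m _; exact (monic_X_add_C _).ne_zero
    · intro m _; exact (monic_X_add_C _).ne_zero
    · exact prod_ne_zero_iff.mpr fun m _ => (monic_X_add_C _).ne_zero
    · exact prod_ne_zero_iff.mpr fun m _ => (monic_X_add_C _).ne_zero
  have key : ∀ i ∈ range (n+1),
      (-1:ℝ)^i * (n.choose i : ℝ) *
        (Real.Gamma ((n:ℝ)+(i:ℝ)+1+a+b) / Real.Gamma ((i:ℝ)+1+b)) *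
        (((b+j+i).factorial : ℝ) / Real.Gamma (a+((b+j+i:ℕ):ℝ)+2))
      = (-1:ℝ)^i * (n.choose i : ℝ) * p.eval (i:ℝ) := by
    intro i _
    have h1 : ((b+j+i).factorial : ℝ) / Real.Gamma ((i:ℝ)+1+b)
        = ∏ m ∈ range j, (((i:ℝ)+1+b) + m) := by
      have hx : (0:ℝ) < (i:ℝ)+1+b := by positivity
      have harg : ((i:ℝ)+1+b) + (j:ℕ) = ((b+j+i : ℕ) : ℝ) + 1 := by push_cast; ring
      rw [← gamma_ratio hx j, harg, Real.Gamma_nat_eq_factorial]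
    have h2 : Real.Gamma ((n:ℝ)+(i:ℝ)+1+a+b) / Real.Gamma (a+((b+j+i:ℕ):ℝ)+2)
        = ∏ m ∈ range (n-1-j), ((a+((b+j+i:ℕ):ℝ)+2) + m) := by
      have hx : (0:ℝ) < a+((b+j+i:ℕ):ℝ)+2 := by positivity
      have harg : (a+((b+j+i:ℕ):ℝ)+2) + ((n-1-j : ℕ):ℝ) = (n:ℝ)+(i:ℝ)+1+a+b := by
        have e : (n-1-j : ℕ) = n - (j+1) := by omega
        have e2 : ((n - (j+1) : ℕ):ℝ) = (n:ℝ) - ((j+1 : ℕ):ℝ) := by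
          rw [Nat.cast_sub hj]
        rw [e, e2]; push_cast; ring
      rw [← gamma_ratio hx (n-1-j), harg]
    have hev : p.eval (i:ℝ)
        = (∏ m ∈ range j, (((i:ℝ)+1+b) + m)) *
          ∏ m ∈ range (n-1-j), ((a+((b+j+i:ℕ):ℝ)+2) + m) := by
      rw [hp]
      simp only [eval_mul, eval_prod, eval_add, eval_X, eval_C]
      congr 1
      · exact prod_congr rfl fun m _ => by push_cast; ring
      · exact prod_congr rfl fun m _ => by push_cast; ring
    rw [hev, ← h1, ← h2]
    ring
  rw [sum_congr rfl key]
  exact sum_alt_poly n p hdeg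

lemma Sj_top (a : ℝ) (ha : 0 ≤ a) (b n : ℕ) :
    ∑ i ∈ range (n+1), (-1:ℝ)^i * (n.choose i : ℝ) *
        (Real.Gamma ((n:ℝ)+(i:ℝ)+1+a+b) / Real.Gamma ((i:ℝ)+1+b)) *
        (((b+n+i).factorial : ℝ) / Real.Gamma (a+((b+n+i:ℕ):ℝ)+2))
      = (-1:ℝ)^n * (n.factorial : ℝ) * Real.Gamma (a+(n:ℝ)+1) * Real.Gamma (a+(b:ℝ)+(n:ℝ)+1)
          / (Real.Gamma (a+1) * Real.Gamma (a+(b:ℝ)+2*(n:ℝ)+2)) := by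
  set e : ℝ := a+(b:ℝ)+(n:ℝ)+1 with he
  have hepos : 0 < e := by rw [he]; positivity
  set Q : Polynomial ℝ := ∏ m ∈ range n, (X + C ((b:ℝ)+1+(m:ℝ))) with hQ
  set c0 : ℝ := Q.eval (-e) with hc0
  -- each term equals Q.eval i * (1/(e+i))
  have key : ∀ i ∈ range (n+1),
      (-1:ℝ)^i * (n.choose i : ℝ) *
        (Real.Gamma ((n:ℝ)+(i:ℝ)+1+a+b) / Real.Gamma ((i:ℝ)+1+b)) *
        (((b+n+i).factorial : ℝ) / Real.Gamma (a+((b+n+i:ℕ):ℝ)+2))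
      = (-1:ℝ)^i * (n.choose i : ℝ) * (Q.eval (i:ℝ) * (1/(e+i))) := by
    intro i _
    have h1 : ((b+n+i).factorial : ℝ) / Real.Gamma ((i:ℝ)+1+b)
        = ∏ m ∈ range n, (((i:ℝ)+1+b) + m) := by
      have hx : (0:ℝ) < (i:ℝ)+1+b := by positivity
      have harg : ((i:ℝ)+1+b) + (n:ℕ) = ((b+n+i : ℕ) : ℝ) + 1 := by push_cast; ring
      rw [← gamma_ratio hx n, harg, Real.Gamma_nat_eq_factorial]
    have h2 : Real.Gamma ((n:ℝ)+(i:ℝ)+1+a+b) / Real.Gamma (a+((b+n+i:ℕ):ℝ)+2)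
        = 1/(e+i) := by
      have hx : (0:ℝ) < e + i := by positivity
      have harg : a+((b+n+i:ℕ):ℝ)+2 = (e+i) + 1 := by rw [he]; push_cast; ring
      have harg2 : (n:ℝ)+(i:ℝ)+1+a+b = e + i := by rw [he]; push_cast; ring
      rw [harg, harg2, Real.Gamma_add_one hx.ne']
      rw [mul_comm, ← div_div, div_self (Real.Gamma_pos_of_pos hx).ne']
    have hev : Q.eval (i:ℝ) = ∏ m ∈ range n, (((i:ℝ)+1+b) + m) := by
      rw [hQ]
      simp only [eval_prod, eval_add, eval_X, eval_C]
      exact prod_congr rfl fun m _ => by ring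
    rw [hev, ← h1, ← h2]
    ring
  rw [sum_congr rfl key]
  -- split Q.eval i = (Q.eval i - c0) + c0
  obtain ⟨s, hs⟩ : (X - C (-e)) ∣ (Q - C c0) :=
    dvd_iff_isRoot.mpr (by simp [IsRoot, hc0])
  have hsplit : ∀ i ∈ range (n+1),
      (-1:ℝ)^i * (n.choose i : ℝ) * (Q.eval (i:ℝ) * (1/(e+i)))
      = (-1:ℝ)^i * (n.choose i : ℝ) * s.eval (i:ℝ)
        + c0 * ((-1:ℝ)^i * (n.choose i : ℝ) * (1/(e+i))) := by
    intro i _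
    have hne : e + (i:ℝ) ≠ 0 := by positivity
    have hqi : Q.eval (i:ℝ) - c0 = ((i:ℝ) + e) * s.eval (i:ℝ) := by
      have := congrArg (fun p => Polynomial.eval (i:ℝ) p) hs
      simpa [eval_sub, eval_mul, eval_C, eval_X, sub_neg_eq_add] using this
    have : Q.eval (i:ℝ) = ((i:ℝ) + e) * s.eval (i:ℝ) + c0 := by linarith [hqi]
    rw [this]
    field_simp
    ring
  rw [sum_congr rfl hsplit, sum_add_distrib, ← mul_sum]
  have hzero : ∑ i ∈ range (n+1), (-1:ℝ)^i * (n.choose i : ℝ) * s.eval (i:ℝ) = 0 := by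
    rcases Nat.eq_zero_or_pos n with hn | hn
    · have hQ1 : Q = C c0 := by
        subst hn
        rw [hc0, hQ]
        simp
      have hs0 : s = 0 := by
        have h0 : (X - C (-e)) * s = 0 := by rw [← hs, hQ1]; ring
        rcases mul_eq_zero.mp h0 with h | h
        · exact ((X_sub_C_ne_zero (-e)) h).elim
        · exact h
      simp [hs0]
    · apply sum_alt_poly
      have hQdeg : Q.natDegree = n := by
        rw [hQ, natDegree_prod _ _ (fun m _ => (monic_X_add_C _).ne_zero)]
        simp only [natDegree_X_add_C, sum_const, card_range, smul_eq_mul, mul_one]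
      have hs0 : s ≠ 0 := by
        intro h
        rw [h, mul_zero] at hs
        have : Q.natDegree = 0 := by rw [(sub_eq_zero.mp hs ▸ rfl : Q = C c0)]; simp
        omega
      have : (Q - C c0).natDegree = n := by rw [natDegree_sub_C, hQdeg]
      rw [hs, natDegree_mul (X_sub_C_ne_zero (-e)) hs0, natDegree_X_sub_C] at this
      omega
  rw [hzero, zero_add]
  rw [sum_alt_inv n e hepos]
  -- compute c0 and the product
  have hprod : ∏ i ∈ range (n+1), (e + (i:ℝ))
      = Real.Gamma (a+(b:ℝ)+2*(n:ℝ)+2) / Real.Gamma e := by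
    have := gamma_add_nat hepos (n+1)
    have harg : e + ((n+1:ℕ):ℝ) = a+(b:ℝ)+2*(n:ℝ)+2 := by rw [he]; push_cast; ring
    rw [harg] at this
    rw [this, mul_comm, mul_div_assoc, div_self (Real.Gamma_pos_of_pos hepos).ne', mul_one]
  have hc0val : c0 = (-1:ℝ)^n * Real.Gamma (a+(n:ℝ)+1) / Real.Gamma (a+1) := by
    rw [hc0, hQ]
    simp only [eval_prod, eval_add, eval_X, eval_C]
    have e1 : ∀ m ∈ range n, -e + ((b:ℝ)+1+(m:ℝ)) = -(a + (n:ℝ) - m) := by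
      intro m _; rw [he]; push_cast; ring
    rw [prod_congr rfl e1]
    have e2 : ∀ m ∈ range n, -(a + (n:ℝ) - m) = (-1) * (a+1+((n-1-m : ℕ):ℝ)) := by
      intro m hm
      have hmn : m < n := mem_range.mp hm
      have : (n-1-m : ℕ) = n - (m+1) := by omega
      rw [this, Nat.cast_sub hmn]
      push_cast; ring
    rw [prod_congr rfl e2, prod_mul_distrib, prod_const, card_range]
    have e3 : ∏ m ∈ range n, (a+1+((n-1-m : ℕ):ℝ)) = ∏ m ∈ range n, (a+1+(m:ℝ)) :=
      prod_range_reflect (fun m => a+1+(m:ℝ)) n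
    rw [e3]
    have e4 := gamma_add_nat (show (0:ℝ) < a+1 by linarith) n
    have e5 : ∏ m ∈ range n, (a + 1 + (m:ℝ))
        = Real.Gamma (a + (n:ℝ) + 1) / Real.Gamma (a+1) := by
      rw [show a + (n:ℝ) + 1 = a + 1 + (n:ℝ) by ring, e4, mul_comm, mul_div_assoc,
        div_self (Real.Gamma_pos_of_pos (show (0:ℝ) < a+1 by linarith)).ne', mul_one]
    rw [e5]
    ring
  rw [hprod, hc0val]
  have hGe : Real.Gamma e = Real.Gamma (a+(b:ℝ)+(n:ℝ)+1) := by rw [he]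
  rw [hGe]
  have hA := (Real.Gamma_pos_of_pos (show (0:ℝ) < a+1 by linarith)).ne'
  have hB := (Real.Gamma_pos_of_pos (show (0:ℝ) < a+(b:ℝ)+2*(n:ℝ)+2 by positivity)).ne'
  have hC := (Real.Gamma_pos_of_pos (show (0:ℝ) < a+(b:ℝ)+(n:ℝ)+1 by positivity)).ne'
  field_simp


def jacCo (a : ℝ) (b : ℕ) (n : ℕ) (i : ℕ) : ℝ :=
  ((-1 : ℝ) ^ n * (Real.Gamma ((n : ℝ) + 1 + b) /
        ((n.factorial : ℝ) * Real.Gamma ((n : ℝ) + 1 + a + b)))) *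
    ((-1:ℝ)^i * (n.choose i : ℝ) *
      (Real.Gamma ((n:ℝ)+(i:ℝ)+1+a+b) / Real.Gamma ((i:ℝ)+1+b)))

lemma jacobi_eval (a : ℝ) (b : ℕ) (n : ℕ) (u : ℝ) :
    jacobiP a (b:ℝ) (n:ℤ) (2*u-1) = ∑ i ∈ range (n+1), jacCo a b n i * u ^ i := by
  rw [jacobiP, if_pos (by positivity : (0:ℤ) ≤ (n:ℤ))]
  simp only [Int.toNat_natCast]
  rw [mul_sum]
  refine sum_congr rfl fun i _ => ?_
  rw [jacCo]
  have h1 : (1 : ℝ) + (2*u-1) = 2*u := by ring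
  rw [h1, mul_pow]
  have h2 : (2:ℝ) ^ (-(i:ℤ)) = ((2:ℝ)^i)⁻¹ := by rw [zpow_neg, zpow_natCast]
  rw [h2]
  have h3 : ((2:ℝ)^i)⁻¹ * (2:ℝ)^i = 1 := inv_mul_cancel₀ (by positivity)
  linear_combination ((((-1:ℝ)) ^ n * (Real.Gamma ((n : ℝ) + 1 + b) /
        ((n.factorial : ℝ) * Real.Gamma ((n : ℝ) + 1 + a + b)))) *
    ((-1:ℝ)^i * (n.choose i : ℝ) *
      (Real.Gamma ((n:ℝ)+(i:ℝ)+1+a+b) / Real.Gamma ((i:ℝ)+1+b))) * u^i) * h3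

lemma rpow_cont {a : ℝ} (ha : 0 ≤ a) : Continuous (fun x : ℝ => x ^ a) := by
  rcases eq_or_lt_of_le ha with h | h
  · simp [← h, Real.rpow_zero]
    exact continuous_const
  · exact continuous_iff_continuousAt.mpr fun x =>
      Real.continuousAt_rpow_const x a (Or.inr ha)

lemma radial (a : ℝ) (ha : 0 ≤ a) (b n : ℕ) :
    ∫ u in (0:ℝ)..1, (1-u)^a * ((u:ℝ)^b * (jacobiP a (b:ℝ) (n:ℤ) (2*u-1))^2)
      = Real.Gamma (a+(n:ℝ)+1) * Real.Gamma ((n:ℝ)+(b:ℝ)+1) /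
        ((2*(n:ℝ)+a+(b:ℝ)+1) * (n.factorial : ℝ) * Real.Gamma (a+(b:ℝ)+(n:ℝ)+1)) := by
  have hcont : ∀ m : ℕ, IntervalIntegrable (fun u : ℝ => (1-u)^a * u ^ m)
      volume 0 1 := by
    intro m
    apply Continuous.intervalIntegrable
    exact ((rpow_cont ha).comp (continuous_const.sub continuous_id)).mul (continuous_pow m)
  -- expand the square
  have hint : ∀ u : ℝ, (1-u)^a * ((u:ℝ)^b * (jacobiP a (b:ℝ) (n:ℤ) (2*u-1))^2)
      = ∑ j ∈ range (n+1), ∑ i ∈ range (n+1),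
          (jacCo a b n j * jacCo a b n i) * ((1-u)^a * u ^ (b+j+i)) := by
    intro u
    rw [jacobi_eval, sq, sum_mul_sum]
    rw [Finset.mul_sum, Finset.mul_sum]
    refine sum_congr rfl fun j _ => ?_
    rw [Finset.mul_sum, Finset.mul_sum]
    refine sum_congr rfl fun i _ => ?_
    rw [pow_add, pow_add]
    ring
  rw [intervalIntegral.integral_congr (fun u _ => hint u)]
  rw [intervalIntegral.integral_finset_sum (fun j _ => by
    apply Continuous.intervalIntegrable
    apply continuous_finset_sum
    intro i _
    exact continuous_const.mul (((rpow_cont ha).comp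
      (continuous_const.sub continuous_id)).mul (continuous_pow (b+j+i))))]
  have swap : ∀ j ∈ range (n+1),
      (∫ u in (0:ℝ)..1, ∑ i ∈ range (n+1),
          (jacCo a b n j * jacCo a b n i) * ((1-u)^a * u ^ (b+j+i)))
      = ∑ i ∈ range (n+1), (jacCo a b n j * jacCo a b n i)
          * (Real.Gamma (a+1) * ((b+j+i).factorial : ℝ) / Real.Gamma (a + (b+j+i:ℕ) + 2)) := by
    intro j _
    rw [intervalIntegral.integral_finset_sum (fun i _ => (hcont (b+j+i)).const_mul _)]
    refine sum_congr rfl fun i _ => ?_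
    rw [intervalIntegral.integral_const_mul, betaNat ha]
  rw [sum_congr rfl swap]
  set K : ℝ := (-1 : ℝ) ^ n * (Real.Gamma ((n : ℝ) + 1 + b) /
        ((n.factorial : ℝ) * Real.Gamma ((n : ℝ) + 1 + a + b))) with hK
  have hfact : ∀ j ∈ range (n+1),
      ∑ i ∈ range (n+1), (jacCo a b n j * jacCo a b n i)
          * (Real.Gamma (a+1) * ((b+j+i).factorial : ℝ) / Real.Gamma (a + (b+j+i:ℕ) + 2))
      = (jacCo a b n j * K * Real.Gamma (a+1)) *
          ∑ i ∈ range (n+1), (-1:ℝ)^i * (n.choose i : ℝ) *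
            (Real.Gamma ((n:ℝ)+(i:ℝ)+1+a+b) / Real.Gamma ((i:ℝ)+1+b)) *
            (((b+j+i).factorial : ℝ) / Real.Gamma (a+((b+j+i:ℕ):ℝ)+2)) := by
    intro j _
    rw [mul_sum]
    refine sum_congr rfl fun i _ => ?_
    rw [jacCo, jacCo, ← hK]
    ring
  rw [sum_congr rfl hfact, sum_range_succ]
  have hzero : ∑ j ∈ range n, (jacCo a b n j * K * Real.Gamma (a+1)) *
          (∑ i ∈ range (n+1), (-1:ℝ)^i * (n.choose i : ℝ) *
            (Real.Gamma ((n:ℝ)+(i:ℝ)+1+a+b) / Real.Gamma ((i:ℝ)+1+b)) *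
            (((b+j+i).factorial : ℝ) / Real.Gamma (a+((b+j+i:ℕ):ℝ)+2))) = 0 := by
    apply sum_eq_zero
    intro j hj
    rw [Sj_zero a ha b n j (mem_range.mp hj), mul_zero]
  rw [hzero, zero_add, Sj_top a ha b n]
  -- final algebra
  have hsgn : ((-1:ℝ))^n * ((-1:ℝ))^n = 1 := by rw [← mul_pow]; norm_num
  set GA := Real.Gamma (a+1) with hGA
  set G1 := Real.Gamma ((n:ℝ) + 1 + (b:ℝ)) with hG1
  set G2 := Real.Gamma ((n:ℝ) + 1 + a + (b:ℝ)) with hG2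
  set G4 := Real.Gamma (a+(n:ℝ)+1) with hG4
  have hG2' : Real.Gamma (a+(b:ℝ)+(n:ℝ)+1) = G2 := by rw [hG2]; ring_nf
  have hG1' : Real.Gamma ((n:ℝ)+(b:ℝ)+1) = G1 := by rw [hG1]; ring_nf
  set G3 := Real.Gamma ((n:ℝ)+(n:ℝ)+1+a+(b:ℝ)) with hG3
  have hG3' : Real.Gamma (a+(b:ℝ)+2*(n:ℝ)+2)
      = ((n:ℝ)+(n:ℝ)+1+a+(b:ℝ)) * G3 := by
    rw [hG3, ← Real.Gamma_add_one (by positivity : (n:ℝ)+(n:ℝ)+1+a+(b:ℝ) ≠ 0)]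
    ring_nf
  have hjn : jacCo a b n n = K * ((-1:ℝ)^n * (n.choose n : ℝ) * (G3 / G1)) := by
    rw [jacCo, ← hK, hG3, hG1]
  rw [hG2', hG1', hG3', hjn, Nat.choose_self]
  have hK2 : K * K = (G1/((n.factorial : ℝ)*G2)) * (G1/((n.factorial:ℝ)*G2)) := by
    rw [hK]
    linear_combination ((G1/((n.factorial : ℝ)*G2)) * (G1/((n.factorial:ℝ)*G2))) * hsgn
  have step : (K * ((-1:ℝ)^n * ((1:ℕ) : ℝ) * (G3 / G1))) * K * GA *
        ((-1:ℝ)^n * (n.factorial : ℝ) * G4 * G2 / (GA * (((n:ℝ)+(n:ℝ)+1+a+(b:ℝ)) * G3)))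
      = (K * K) * (((-1:ℝ)^n * (-1:ℝ)^n)) * (G3 / G1) * GA *
        ((n.factorial : ℝ) * G4 * G2 / (GA * (((n:ℝ)+(n:ℝ)+1+a+(b:ℝ)) * G3))) := by
    push_cast
    ring
  rw [step, hK2, hsgn]
  have hGAne : GA ≠ 0 := by
    rw [hGA]; exact (Real.Gamma_pos_of_pos (by linarith)).ne'
  have hG1ne : G1 ≠ 0 := by
    rw [hG1]; exact (Real.Gamma_pos_of_pos (by positivity)).ne'
  have hG2ne : G2 ≠ 0 := by
    rw [hG2]; exact (Real.Gamma_pos_of_pos (by positivity)).ne'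
  have hG3ne : G3 ≠ 0 := by
    rw [hG3]; exact (Real.Gamma_pos_of_pos (by positivity)).ne'
  have hfne : (n.factorial : ℝ) ≠ 0 := by positivity
  have hdne : (n:ℝ)+(n:ℝ)+1+a+(b:ℝ) ≠ 0 := by positivity
  have heq : 2*(n:ℝ)+a+(b:ℝ)+1 = (n:ℝ)+(n:ℝ)+1+a+(b:ℝ) := by ring
  rw [heq]
  field_simp


lemma re_xy (x y : ℝ) : ((x:ℂ) + (y:ℂ)*Complex.I).re = x := by simp
lemma im_xy (x y : ℝ) : ((x:ℂ) + (y:ℂ)*Complex.I).im = y := by simp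

lemma solid_polar (k : ℕ) (r θ : ℝ) :
    (((r * Real.cos θ : ℝ) : ℂ) + ((r * Real.sin θ : ℝ) : ℂ) * Complex.I) ^ k
      = ((r^k * Real.cos (k*θ) : ℝ) : ℂ) + ((r^k * Real.sin (k*θ) : ℝ) : ℂ) * Complex.I := by
  have h : ((r * Real.cos θ : ℝ) : ℂ) + ((r * Real.sin θ : ℝ) : ℂ) * Complex.I
      = (r : ℂ) * Complex.exp (θ * Complex.I) := by
    rw [Complex.exp_mul_I]
    push_cast
    ring
  rw [h, mul_pow, ← Complex.exp_nat_mul]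
  have h2 : (k : ℂ) * (θ * Complex.I) = (((k*θ : ℝ)) : ℂ) * Complex.I := by
    push_cast; ring
  rw [h2, Complex.exp_mul_I]
  push_cast
  ring

lemma jac_cont (a : ℝ) (b n : ℕ) :
    Continuous (fun u : ℝ => jacobiP a (b:ℝ) (n:ℤ) (2*u-1)) := by
  have : (fun u : ℝ => jacobiP a (b:ℝ) (n:ℤ) (2*u-1))
      = fun u : ℝ => ∑ i ∈ Finset.range (n+1), jacCo a b n i * u ^ i :=
    funext (jacobi_eval a b n)
  rw [this]
  exact continuous_finset_sum _ fun i _ => continuous_const.mul (continuous_pow i)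

lemma main_aux (γ : ℝ) (hγ : 0 ≤ γ) (l n : ℕ) (μ : ℤ) (ang : ℝ → ℝ)
    (hsol : ∀ r θ : ℝ, 0 < r →
      solidH (l:ℤ) μ (r * Real.cos θ, r * Real.sin θ) = r^l * ang θ) :
    (∫ p in unitDisk, (1 - (p.1 ^ 2 + p.2 ^ 2)) ^ γ *
        (solidH (l : ℤ) μ p *
          jacobiP γ (l : ℝ) (n : ℤ) (2 * (p.1 ^ 2 + p.2 ^ 2) - 1)) ^ 2)
      = ((1/2) * (Real.Gamma (γ+(n:ℝ)+1) * Real.Gamma ((n:ℝ)+(l:ℝ)+1) /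
          ((2*(n:ℝ)+γ+(l:ℝ)+1) * (n.factorial : ℝ) * Real.Gamma (γ+(l:ℝ)+(n:ℝ)+1))))
        * ∫ θ in Set.Ioo (-π) π, (ang θ)^2 := by
  set F : ℝ × ℝ → ℝ := fun p => (1 - (p.1 ^ 2 + p.2 ^ 2)) ^ γ *
        (solidH (l : ℤ) μ p *
          jacobiP γ (l : ℝ) (n : ℤ) (2 * (p.1 ^ 2 + p.2 ^ 2) - 1)) ^ 2 with hF
  have hmeas : MeasurableSet unitDisk := by
    have : unitDisk = (fun p : ℝ × ℝ => p.1^2+p.2^2) ⁻¹' (Set.Iio 1) := rfl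
    rw [this]
    exact ((continuous_fst.pow 2).add (continuous_snd.pow 2)).measurable measurableSet_Iio
  rw [← integral_indicator hmeas, ← integral_comp_polarCoord_symm]
  set g : ℝ → ℝ := Set.indicator (Set.Ioo (0:ℝ) 1)
      (fun r => r * ((1-r^2)^γ * ((r^l)^2 * (jacobiP γ (l:ℝ) (n:ℤ) (2*r^2-1))^2))) with hg
  set h : ℝ → ℝ := fun θ => (ang θ)^2 with hh
  have htarg : polarCoord.target = Set.Ioi (0:ℝ) ×ˢ Set.Ioo (-π) π := rfl
  have hsymm : ∀ p : ℝ × ℝ, polarCoord.symm p = (p.1 * Real.cos p.2, p.1 * Real.sin p.2) :=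
    fun p => rfl
  have hEq : Set.EqOn (fun p : ℝ × ℝ => p.1 • Set.indicator unitDisk F (polarCoord.symm p))
      (fun p : ℝ × ℝ => g p.1 * h p.2) polarCoord.target := by
    rintro ⟨r, θ⟩ hp
    rw [htarg] at hp
    obtain ⟨hr, -⟩ := hp
    rw [Set.mem_Ioi] at hr
    have hxy : (r * Real.cos θ)^2 + (r * Real.sin θ)^2 = r^2 := by
      have := Real.sin_sq_add_cos_sq θ
      nlinarith [this]
    simp only [hsymm]
    by_cases hlt : r^2 < 1
    · have hmem : (r * Real.cos θ, r * Real.sin θ) ∈ unitDisk := by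
        show (r * Real.cos θ)^2 + (r * Real.sin θ)^2 < 1
        rw [hxy]; exact hlt
      have hmem2 : r ∈ Set.Ioo (0:ℝ) 1 := by
        constructor
        · exact hr
        · nlinarith
      rw [Set.indicator_of_mem hmem, hg, Set.indicator_of_mem hmem2, hF]
      simp only [smul_eq_mul]
      show r * ((1 - ((r * Real.cos θ)^2 + (r * Real.sin θ)^2)) ^ γ *
        (solidH (l:ℤ) μ (r * Real.cos θ, r * Real.sin θ) *
          jacobiP γ (l:ℝ) (n:ℤ) (2 * ((r * Real.cos θ)^2 + (r * Real.sin θ)^2) - 1))^2) = _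
      rw [hxy, hsol r θ hr]
      ring
    · have hmem : (r * Real.cos θ, r * Real.sin θ) ∉ unitDisk := by
        show ¬ ((r * Real.cos θ)^2 + (r * Real.sin θ)^2 < 1)
        rw [hxy]; exact hlt
      have hmem2 : r ∉ Set.Ioo (0:ℝ) 1 := by
        rintro ⟨h1, h2⟩
        exact hlt (by nlinarith)
      rw [Set.indicator_of_notMem hmem, hg, Set.indicator_of_notMem hmem2]
      simp
  rw [setIntegral_congr_fun (htarg ▸ (measurableSet_Ioi.prod measurableSet_Ioo)) hEq]
  rw [htarg, Measure.volume_eq_prod, setIntegral_prod_mul]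
  congr 1
  -- radial part
  have hIoo : Set.Ioi (0:ℝ) ∩ Set.Ioo (0:ℝ) 1 = Set.Ioo (0:ℝ) 1 := by
    rw [Set.inter_eq_self_of_subset_right]
    exact fun x hx => hx.1
  rw [hg, setIntegral_indicator measurableSet_Ioo, hIoo]
  rw [← integral_Ioc_eq_integral_Ioo, ← intervalIntegral.integral_of_le (by norm_num : (0:ℝ) ≤ 1)]
  -- substitution u = r^2
  have hsub := intervalIntegral.integral_comp_smul_deriv
    (a := (0:ℝ)) (b := 1)
    (f := fun r : ℝ => r^2) (f' := fun r : ℝ => 2*r)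
    (g := fun u : ℝ => (1/2) * ((1-u)^γ * ((u:ℝ)^l * (jacobiP γ (l:ℝ) (n:ℤ) (2*u-1))^2)))
    (fun x _ => by simpa using hasDerivAt_pow 2 x)
    (by fun_prop)
    (by
      apply continuous_const.mul
      apply Continuous.mul
      · exact (rpow_cont hγ).comp (continuous_const.sub continuous_id)
      · exact (continuous_pow l).mul ((jac_cont γ l n).pow 2))
  simp only [Function.comp] at hsub
  have hLHS : ∫ r in (0:ℝ)..1,
      r * ((1-r^2)^γ * ((r^l)^2 * (jacobiP γ (l:ℝ) (n:ℤ) (2*r^2-1))^2))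
      = ∫ r in (0:ℝ)..1, (2*r) • ((1/2) * ((1-r^2)^γ *
          (((r^2:ℝ))^l * (jacobiP γ (l:ℝ) (n:ℤ) (2*r^2-1))^2))) := by
    apply intervalIntegral.integral_congr
    intro x _
    have : ((x^2:ℝ))^l = (x^l)^2 := by rw [← pow_mul, ← pow_mul, mul_comm]
    dsimp only
    rw [this, smul_eq_mul]
    ring
  rw [hLHS, hsub]
  norm_num
  exact radial γ hγ l n

lemma ang_const_val : (∫ _ in Set.Ioo (-π) π, ((1:ℝ)/2)^2) = π/2 := by
  rw [setIntegral_const]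
  rw [measureReal_def, Real.volume_Ioo]
  rw [ENNReal.toReal_ofReal (by linarith [Real.pi_pos] : (0:ℝ) ≤ π - (-π))]
  rw [smul_eq_mul]
  ring

lemma ang_cos_val (k : ℕ) (hk : k ≠ 0) :
    (∫ θ in Set.Ioo (-π) π, (Real.cos ((k:ℝ)*θ))^2) = π := by
  have hkR : ((k:ℝ)) ≠ 0 := Nat.cast_ne_zero.mpr hk
  rw [← integral_Ioc_eq_integral_Ioo,
    ← intervalIntegral.integral_of_le (by linarith [Real.pi_pos] : -π ≤ π)]
  rw [intervalIntegral.integral_comp_mul_left (fun x => Real.cos x ^ 2) hkR]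
  rw [integral_cos_sq]
  have h1 : Real.sin ((k:ℝ)*π) = 0 := Real.sin_nat_mul_pi k
  have h2 : (k:ℝ) * (-π) = -((k:ℝ)*π) := by ring
  rw [h2, Real.sin_neg, Real.cos_neg, h1]
  rw [smul_eq_mul]
  field_simp
  ring

lemma ang_sin_val (k : ℕ) (hk : k ≠ 0) :
    (∫ θ in Set.Ioo (-π) π, (Real.sin ((k:ℝ)*θ))^2) = π := by
  have hkR : ((k:ℝ)) ≠ 0 := Nat.cast_ne_zero.mpr hk
  rw [← integral_Ioc_eq_integral_Ioo,
    ← intervalIntegral.integral_of_le (by linarith [Real.pi_pos] : -π ≤ π)]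
  rw [intervalIntegral.integral_comp_mul_left (fun x => Real.sin x ^ 2) hkR]
  rw [integral_sin_sq]
  have h1 : Real.sin ((k:ℝ)*π) = 0 := Real.sin_nat_mul_pi k
  have h2 : (k:ℝ) * (-π) = -((k:ℝ)*π) := by ring
  rw [h2, Real.sin_neg, Real.cos_neg, h1]
  rw [smul_eq_mul]
  field_simp
  ring

end Aux

/-- explicit value of the squared weighted norm of the basis functions:
`∫_Ω (1-r²)^γ (𝒱_{l,μ} P_n^{(γ,l)}(2r²-1))² = [C_{l,μ}/(2(2n+γ+l+1))]
  · Γ(n+γ+1)Γ(n+l+1)/(Γ(n+1)Γ(n+γ+l+1))`, which is strictly positive (and, being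
independent of `μ`, the same for `μ = ±1` when `l ≥ 1`). -/
theorem stmt19 (γ : ℝ) (hγ : 0 ≤ γ) (l n : ℕ) (μ : ℤ) (hμ : μ = 1 ∨ μ = -1)
    (hlμ : ¬(l = 0 ∧ μ = -1)) :
    (∫ p in unitDisk, (1 - (p.1 ^ 2 + p.2 ^ 2)) ^ γ *
        (solidH (l : ℤ) μ p *
          jacobiP γ (l : ℝ) (n : ℤ) (2 * (p.1 ^ 2 + p.2 ^ 2) - 1)) ^ 2) =
      Cc l / (2 * (2 * (n : ℝ) + γ + (l : ℝ) + 1)) *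
        (Real.Gamma ((n : ℝ) + γ + 1) * Real.Gamma ((n : ℝ) + (l : ℝ) + 1) /
          (Real.Gamma ((n : ℝ) + 1) * Real.Gamma ((n : ℝ) + γ + (l : ℝ) + 1))) ∧
    0 < Cc l / (2 * (2 * (n : ℝ) + γ + (l : ℝ) + 1)) *
        (Real.Gamma ((n : ℝ) + γ + 1) * Real.Gamma ((n : ℝ) + (l : ℝ) + 1) /
          (Real.Gamma ((n : ℝ) + 1) * Real.Gamma ((n : ℝ) + γ + (l : ℝ) + 1))) := by
  have hpos : (0:ℝ) < 2 * (n : ℝ) + γ + (l : ℝ) + 1 := by positivity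
  constructor
  · -- the equality
    have hval : ∀ A : ℝ, A = Cc l →
        ((1/2) * (Real.Gamma (γ+(n:ℝ)+1) * Real.Gamma ((n:ℝ)+(l:ℝ)+1) /
          ((2*(n:ℝ)+γ+(l:ℝ)+1) * (n.factorial : ℝ) * Real.Gamma (γ+(l:ℝ)+(n:ℝ)+1)))) * A
        = Cc l / (2 * (2 * (n : ℝ) + γ + (l : ℝ) + 1)) *
          (Real.Gamma ((n : ℝ) + γ + 1) * Real.Gamma ((n : ℝ) + (l : ℝ) + 1) /
            (Real.Gamma ((n : ℝ) + 1) * Real.Gamma ((n : ℝ) + γ + (l : ℝ) + 1))) := by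
      rintro A rfl
      have e1 : Real.Gamma (γ+(n:ℝ)+1) = Real.Gamma ((n:ℝ)+γ+1) := by ring_nf
      have e2 : Real.Gamma (γ+(l:ℝ)+(n:ℝ)+1) = Real.Gamma ((n:ℝ)+γ+(l:ℝ)+1) := by ring_nf
      have e3 : Real.Gamma ((n:ℝ)+1) = (n.factorial : ℝ) := Real.Gamma_nat_eq_factorial n
      rw [e1, e2, e3]
      have hfne : (n.factorial : ℝ) ≠ 0 := by positivity
      have hg2ne : Real.Gamma ((n:ℝ)+γ+(l:ℝ)+1) ≠ 0 :=
        (Real.Gamma_pos_of_pos (by positivity)).ne'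
      field_simp
    by_cases hl : l = 0
    · subst hl
      have hμ1 : μ = 1 := by
        rcases hμ with h | h
        · exact h
        · exact absurd ⟨rfl, h⟩ hlμ
      subst hμ1
      rw [main_aux γ hγ 0 n 1 (fun _ => 1/2) (by
        intro r θ hr
        rw [solidH]
        norm_num)]
      rw [← hval (∫ θ in Set.Ioo (-Real.pi) Real.pi, ((1:ℝ)/2)^2) (by rw [ang_const_val, Cc]; norm_num)]
    · rcases hμ with hμ1 | hμ1 <;> subst hμ1
      · rw [main_aux γ hγ l n 1 (fun θ => Real.cos ((l:ℝ)*θ)) (by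
          intro r θ hr
          rw [solidH]
          rw [if_neg (by exact_mod_cast hl), if_pos (by
            exact_mod_cast Nat.pos_of_ne_zero hl), if_pos rfl]
          simp only [Int.toNat_natCast]
          rw [solid_polar l r θ]
          exact re_xy _ _)]
        rw [← hval (∫ θ in Set.Ioo (-Real.pi) Real.pi, (Real.cos ((l:ℝ)*θ))^2)
          (by rw [ang_cos_val l hl, Cc, if_neg hl])]
      · rw [main_aux γ hγ l n (-1) (fun θ => Real.sin ((l:ℝ)*θ)) (by
          intro r θ hr
          rw [solidH]
          rw [if_neg (by exact_mod_cast hl), if_pos (by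
            exact_mod_cast Nat.pos_of_ne_zero hl), if_neg (by norm_num), if_pos rfl]
          simp only [Int.toNat_natCast]
          rw [solid_polar l r θ]
          exact im_xy _ _)]
        rw [← hval (∫ θ in Set.Ioo (-Real.pi) Real.pi, (Real.sin ((l:ℝ)*θ))^2)
          (by rw [ang_sin_val l hl, Cc, if_neg hl])]
  · -- positivity
    have hCc : 0 < Cc l := by
      rw [Cc]
      split <;> [linarith [Real.pi_pos]; exact Real.pi_pos]
    have h1 : 0 < Real.Gamma ((n:ℝ)+γ+1) := Real.Gamma_pos_of_pos (by positivity)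
    have h2 : 0 < Real.Gamma ((n:ℝ)+(l:ℝ)+1) := Real.Gamma_pos_of_pos (by positivity)
    have h3 : 0 < Real.Gamma ((n:ℝ)+1) := Real.Gamma_pos_of_pos (by positivity)
    have h4 : 0 < Real.Gamma ((n:ℝ)+γ+(l:ℝ)+1) := Real.Gamma_pos_of_pos (by positivity)
    positivity
end
end
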